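/- arXiv:1812.03688 — 2 statements merged into one kernel-verified Lean document; each statement's English description precedes it below -/
import Mathlib

section
/- Let ω ∈ [0,1], let Q = [[D, −C], [−B, A]] with Q_ω a nonsingular M-matrix and Q_ω·1 > 0, let Q̃ = [[D̃, −C̃], [−B̃, Ã]] be a real nonsingular M-matrix with Q̃ ≤ Q_ω and Q̃·1 > 0, and let Ψ̃ be the minimal nonnegative solution of YB̃Y − YÃ − D̃Y + C̃ = 0. Then the dual NARE YBY − YA − DY + C = 0 has exactly one solution Ψ ∈ C^{n×m} with |Ψ| ≤ Ψ̃ entrywise; moreover A − BΨ is nonsingular, every eigenvalue μ of A − BΨ satisfies ω·Re(μ) + (1−ω)·Im(μ) > 0, and Ψ is the unique solution of the dual NARE with this spectral property. -/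
open Matrix Filter Kronecker Polynomial Topology

noncomputable section

/-- The ω-weighted linear functional `z ↦ ω·Re z + (1-ω)·Im z`. -/
def wlin (ω : ℝ) (z : ℂ) : ℝ := ω * z.re + (1 - ω) * z.im

/-- The ω-comparison matrix of a complex square matrix. -/
def omegaComp {N : Type*} [DecidableEq N] (ω : ℝ) (B : Matrix N N ℂ) : Matrix N N ℝ :=
  Matrix.of fun i j => if i = j then wlin ω (B i i) else -‖B i j‖

/-- A real square matrix is a nonsingular M-matrix: nonpositive off-diagonal entries and
`M *ᵥ u > 0` entrywise for some entrywise positive `u`. -/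
def IsNonsingMMatrix {N : Type*} [Fintype N] (M : Matrix N N ℝ) : Prop :=
  (∀ i j, i ≠ j → M i j ≤ 0) ∧ ∃ u : N → ℝ, (∀ i, 0 < u i) ∧ ∀ i, 0 < (M *ᵥ u) i

/-- Entrywise absolute value of a complex matrix. -/
def cabs {α β : Type*} (M : Matrix α β ℂ) : Matrix α β ℝ :=
  Matrix.of fun i j => ‖M i j‖

namespace Stmt5

lemma wlin_sub (ω : ℝ) (x y : ℂ) : wlin ω (x - y) = wlin ω x - wlin ω y := by
  simp [wlin]; ring

lemma wlin_add (ω : ℝ) (x y : ℂ) : wlin ω (x + y) = wlin ω x + wlin ω y := by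
  simp [wlin]; ring

lemma wlin_neg (ω : ℝ) (x : ℂ) : wlin ω (-x) = - wlin ω x := by
  simp [wlin]; ring

lemma wlin_zero (ω : ℝ) : wlin ω 0 = 0 := by simp [wlin]

lemma wlin_le_abs {ω : ℝ} (hω : ω ∈ Set.Icc (0:ℝ) 1) (z : ℂ) :
    wlin ω z ≤ ‖z‖ := by
  obtain ⟨h0, h1⟩ := hω
  have hre : z.re ≤ ‖z‖ := Complex.re_le_norm z
  have him : z.im ≤ ‖z‖ := (le_abs_self _).trans (Complex.abs_im_le_norm z)
  have hnn : 0 ≤ ‖z‖ := norm_nonneg z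
  unfold wlin
  nlinarith

section Helpers

variable {α β γ : Type*} [Fintype β]

lemma mul_entry_nonneg {P : Matrix α β ℝ} {Q : Matrix β γ ℝ}
    (hP : ∀ i j, 0 ≤ P i j) (hQ : ∀ i j, 0 ≤ Q i j) (i : α) (j : γ) :
    0 ≤ (P * Q) i j := by
  rw [Matrix.mul_apply]
  exact Finset.sum_nonneg fun k _ => mul_nonneg (hP i k) (hQ k j)

lemma mul_entry_mono {P P' : Matrix α β ℝ} {Q Q' : Matrix β γ ℝ}
    (hP0 : ∀ i j, 0 ≤ P i j) (hP : ∀ i j, P i j ≤ P' i j)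
    (hQ0 : ∀ i j, 0 ≤ Q i j) (hQ : ∀ i j, Q i j ≤ Q' i j) (i : α) (j : γ) :
    (P * Q) i j ≤ (P' * Q') i j := by
  rw [Matrix.mul_apply, Matrix.mul_apply]
  exact Finset.sum_le_sum fun k _ =>
    mul_le_mul (hP i k) (hQ k j) (hQ0 k j) ((hP0 i k).trans (hP i k))

lemma abs_mul_entry {P : Matrix α β ℂ} {Q : Matrix β γ ℂ}
    {Pt : Matrix α β ℝ} {Qt : Matrix β γ ℝ}
    (hP : ∀ i j, ‖P i j‖ ≤ Pt i j) (hQ : ∀ i j, ‖Q i j‖ ≤ Qt i j)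
    (i : α) (j : γ) : ‖(P * Q) i j‖ ≤ (Pt * Qt) i j := by
  rw [Matrix.mul_apply, Matrix.mul_apply]
  refine (norm_sum_le _ _).trans (Finset.sum_le_sum fun k _ => ?_)
  rw [norm_mul]
  exact mul_le_mul (hP i k) (hQ k j) (norm_nonneg _)
    ((norm_nonneg _).trans (hP i k))

end Helpers

section Gersh

variable {p : Type*} [Fintype p] [DecidableEq p]

/-- Weighted Gershgorin-type bound. -/
lemma gersh {ω : ℝ} (hω : ω ∈ Set.Icc (0:ℝ) 1)
    (T : Matrix p p ℂ) (Mt : Matrix p p ℝ) (w : p → ℝ) (hw : ∀ i, 0 < w i)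
    (hdiag : ∀ i, Mt i i ≤ wlin ω (T i i))
    (hoff : ∀ i j, i ≠ j → ‖T i j‖ ≤ - Mt i j)
    (hMw : ∀ i, 0 < ∑ j, Mt i j * w j)
    (μ : ℂ) (v : p → ℂ) (hv : v ≠ 0) (heig : T *ᵥ v = μ • v) : 0 < wlin ω μ := by
  obtain ⟨i₀, -, hmax⟩ := Finset.exists_max_image Finset.univ
    (fun i => ‖v i‖ / w i) ⟨Classical.choice (by
      obtain ⟨j, hj⟩ := Function.ne_iff.mp hv; exact ⟨j⟩), Finset.mem_univ _⟩
  set ρ := ‖v i₀‖ / w i₀ with hρ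
  have hρpos : 0 < ρ := by
    obtain ⟨j, hj⟩ := Function.ne_iff.mp hv
    have h1 : 0 < ‖v j‖ / w j :=
      div_pos (norm_pos_iff.mpr hj) (hw j)
    exact h1.trans_le (hmax j (Finset.mem_univ j))
  have hbnd : ∀ j, ‖v j‖ ≤ ρ * w j := by
    intro j
    have := hmax j (Finset.mem_univ j)
    rw [div_le_iff₀ (hw j)] at this
    simpa [mul_comm] using this
  have hvi₀ : ‖v i₀‖ = ρ * w i₀ := by
    rw [hρ, div_mul_cancel₀ _ (hw i₀).ne']
  -- row equation
  have hrow : ∑ j, T i₀ j * v j = μ * v i₀ := by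
    have := congrFun heig i₀
    simpa [Matrix.mulVec, dotProduct] using this
  have hsplit : (T i₀ i₀ - μ) * v i₀ = - ∑ j ∈ Finset.univ.erase i₀, T i₀ j * v j := by
    have := Finset.add_sum_erase Finset.univ (fun j => T i₀ j * v j) (Finset.mem_univ i₀)
    rw [← this] at hrow
    ring_nf
    linear_combination hrow
  have habs : ‖T i₀ i₀ - μ‖ * (ρ * w i₀) ≤
      ρ * ∑ j ∈ Finset.univ.erase i₀, (- Mt i₀ j) * w j := by
    rw [← hvi₀, ← norm_mul, hsplit, norm_neg, Finset.mul_sum]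
    refine (norm_sum_le _ _).trans (Finset.sum_le_sum fun j hj => ?_)
    rw [norm_mul]
    have hj' : j ≠ i₀ := Finset.ne_of_mem_erase hj
    calc ‖T i₀ j‖ * ‖v j‖
        ≤ (- Mt i₀ j) * (ρ * w j) := by
          refine mul_le_mul (hoff i₀ j (Ne.symm hj')) (hbnd j) (norm_nonneg _) ?_
          exact (norm_nonneg _).trans (hoff i₀ j (Ne.symm hj'))
      _ = ρ * ((- Mt i₀ j) * w j) := by ring
  have hwl : Mt i₀ i₀ - wlin ω μ ≤ ‖T i₀ i₀ - μ‖ := by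
    calc Mt i₀ i₀ - wlin ω μ ≤ wlin ω (T i₀ i₀) - wlin ω μ := by
          linarith [hdiag i₀]
      _ = wlin ω (T i₀ i₀ - μ) := (wlin_sub ω _ _).symm
      _ ≤ ‖T i₀ i₀ - μ‖ := wlin_le_abs hω _
  have hchain : (Mt i₀ i₀ - wlin ω μ) * (ρ * w i₀) ≤
      ρ * ∑ j ∈ Finset.univ.erase i₀, (- Mt i₀ j) * w j := by
    refine le_trans ?_ habs
    exact mul_le_mul_of_nonneg_right hwl (mul_nonneg hρpos.le (hw i₀).le)
  have hkey : Mt i₀ i₀ * w i₀ + ∑ j ∈ Finset.univ.erase i₀, Mt i₀ j * w j ≤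
      wlin ω μ * w i₀ := by
    have h2 : (Mt i₀ i₀ - wlin ω μ) * w i₀ ≤ ∑ j ∈ Finset.univ.erase i₀, (- Mt i₀ j) * w j := by
      have := hchain
      nlinarith [hρpos]
    have h3 : ∑ j ∈ Finset.univ.erase i₀, (- Mt i₀ j) * w j
        = - ∑ j ∈ Finset.univ.erase i₀, Mt i₀ j * w j := by
      rw [← Finset.sum_neg_distrib]; congr 1; ext j; ring
    rw [h3] at h2; nlinarith
  have hsum : ∑ j, Mt i₀ j * w j =
      Mt i₀ i₀ * w i₀ + ∑ j ∈ Finset.univ.erase i₀, Mt i₀ j * w j :=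
    (Finset.add_sum_erase Finset.univ (fun j => Mt i₀ j * w j) (Finset.mem_univ i₀)).symm
  have : 0 < wlin ω μ * w i₀ := lt_of_lt_of_le (by rw [← hsum]; exact hMw i₀) hkey
  by_contra hcon
  push_neg at hcon
  nlinarith [hw i₀]

end Gersh
section Eigen

variable {p : Type*} [Fintype p] [DecidableEq p]

lemma eig_of_not_isUnit {T : Matrix p p ℂ} {μ : ℂ}
    (h : ¬ IsUnit ((algebraMap ℂ (Matrix p p ℂ)) μ - T)) :
    ∃ v : p → ℂ, v ≠ 0 ∧ T *ᵥ v = μ • v := by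
  rw [Matrix.isUnit_iff_isUnit_det, isUnit_iff_ne_zero, not_not] at h
  obtain ⟨v, hv0, hv⟩ := (Matrix.exists_mulVec_eq_zero_iff).mpr h
  refine ⟨v, hv0, ?_⟩
  have h1 : (algebraMap ℂ (Matrix p p ℂ)) μ = μ • (1 : Matrix p p ℂ) :=
    Algebra.algebraMap_eq_smul_one μ
  rw [h1, Matrix.sub_mulVec, Matrix.smul_mulVec, Matrix.one_mulVec, sub_eq_zero] at hv
  exact hv.symm

lemma eig_of_det_eq_zero {T : Matrix p p ℂ} {μ : ℂ}
    (h : ((algebraMap ℂ (Matrix p p ℂ)) μ - T).det = 0) :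
    ∃ v : p → ℂ, v ≠ 0 ∧ T *ᵥ v = μ • v := by
  apply eig_of_not_isUnit
  rw [Matrix.isUnit_iff_isUnit_det, isUnit_iff_ne_zero, not_not]
  exact h

lemma charpoly_eval (M : Matrix p p ℂ) (r : ℂ) :
    (M.charpoly).eval r = ((algebraMap ℂ (Matrix p p ℂ)) r - M).det := by
  rw [Matrix.charpoly, Polynomial.eval, ← Polynomial.coe_eval₂RingHom, RingHom.map_det]
  congr 1
  ext i j
  by_cases hij : i = j
  · subst hij
    simp [Matrix.charmatrix_apply_eq, Matrix.algebraMap_matrix_apply]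
  · simp [Matrix.charmatrix_apply_ne _ _ _ hij, Matrix.algebraMap_matrix_apply, hij]

/-- If `r` is a root of the charpoly of `T`, then `T` has eigenvector with eigenvalue `r`. -/
lemma eig_of_root_charpoly {T : Matrix p p ℂ} {r : ℂ} (h : r ∈ T.charpoly.roots) :
    ∃ v : p → ℂ, v ≠ 0 ∧ T *ᵥ v = r • v := by
  apply eig_of_det_eq_zero
  rw [← charpoly_eval]
  exact (Polynomial.isRoot_of_mem_roots h)

lemma mem_spectrum_of_det {S : Matrix p p ℂ} {r : ℂ}
    (h : ¬ IsUnit (S - (algebraMap ℂ (Matrix p p ℂ)) r)) : r ∈ spectrum ℂ S := by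
  rw [spectrum.mem_iff]
  intro hu
  exact h (by simpa using hu.neg)

/-- Sylvester-type uniqueness via Cayley–Hamilton. -/
lemma sylvester_eq_zero {q : Type*} [Fintype q] [DecidableEq q]
    (E : Matrix q p ℂ) (S : Matrix p p ℂ) (T : Matrix q q ℂ)
    (hE : E * S = T * E)
    (hdisj : ∀ r ∈ T.charpoly.roots, IsUnit (S - (algebraMap ℂ (Matrix p p ℂ)) r)) :
    E = 0 := by
  have hpow : ∀ k : ℕ, E * S ^ k = T ^ k * E := by
    intro k
    induction k with
    | zero => simp
    | succ k ih =>
      rw [pow_succ, pow_succ, ← Matrix.mul_assoc, ih, Matrix.mul_assoc, hE,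
        ← Matrix.mul_assoc]
  have key : ∀ pl : Polynomial ℂ, E * (Polynomial.aeval S) pl = (Polynomial.aeval T) pl * E := by
    intro pl
    induction pl using Polynomial.induction_on' with
    | add f g hf hg => rw [map_add, map_add, Matrix.mul_add, hf, hg, Matrix.add_mul]
    | monomial k c =>
      rw [Polynomial.aeval_monomial, Polynomial.aeval_monomial]
      rw [Algebra.algebraMap_eq_smul_one, Algebra.algebraMap_eq_smul_one]
      rw [smul_mul_assoc, smul_mul_assoc, one_mul, one_mul, Matrix.mul_smul, hpow,
        Matrix.smul_mul]
  have h0 : E * (Polynomial.aeval S) T.charpoly = 0 := by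
    rw [key, Matrix.aeval_self_charpoly, Matrix.zero_mul]
  have hu : IsUnit ((Polynomial.aeval S) T.charpoly) := by
    set l := (Multiset.map (fun a => (Polynomial.X : Polynomial ℂ) - Polynomial.C a)
      T.charpoly.roots).toList with hl
    have hcp : T.charpoly = l.prod := by
      rw [hl, Multiset.prod_toList]
      exact (IsAlgClosed.splits T.charpoly).eq_prod_roots_of_monic T.charpoly_monic
    rw [hcp, map_list_prod]
    have hunit : ∀ x ∈ l.map (Polynomial.aeval S), IsUnit x := by
      intro x hx
      obtain ⟨pl, hpl, rfl⟩ := List.mem_map.mp hx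
      have : pl ∈ Multiset.map (fun a => (Polynomial.X : Polynomial ℂ) - Polynomial.C a)
          T.charpoly.roots := by
        rw [hl] at hpl
        exact (Multiset.mem_toList).mp hpl
      obtain ⟨r, hr, rfl⟩ := Multiset.mem_map.mp this
      rw [map_sub, Polynomial.aeval_X, Polynomial.aeval_C]
      exact hdisj r hr
    generalize l.map (Polynomial.aeval S) = ll at hunit
    induction ll with
    | nil => simp
    | cons a s ih =>
      rw [List.prod_cons]
      exact (hunit a List.mem_cons_self).mul
        (ih (fun x hx => hunit x (List.mem_cons_of_mem a hx)))
  obtain ⟨u, hu⟩ := hu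
  have h1 : E * ((Polynomial.aeval S) T.charpoly * (↑u⁻¹ : Matrix p p ℂ)) = 0 := by
    rw [← Matrix.mul_assoc, h0, Matrix.zero_mul]
  have h2 : (Polynomial.aeval S) T.charpoly * (↑u⁻¹ : Matrix p p ℂ) = 1 := by
    rw [← hu]; exact u.mul_inv
  rw [h2, Matrix.mul_one] at h1
  exact h1

end Eigen
section Fmap

variable {m n : ℕ}

/-- The splitting iteration map for the dual NARE. -/
def Fmap {𝕜 : Type*} [Field 𝕜] (A : Matrix (Fin m) (Fin m) 𝕜) (Bm : Matrix (Fin m) (Fin n) 𝕜)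
    (Cm : Matrix (Fin n) (Fin m) 𝕜) (Dm : Matrix (Fin n) (Fin n) 𝕜)
    (Z : Matrix (Fin n) (Fin m) 𝕜) : Matrix (Fin n) (Fin m) 𝕜 :=
  Matrix.of fun i j =>
    ((Z * Bm * Z + Cm + (Matrix.diagonal (fun i' => Dm i' i') - Dm) * Z
      + Z * (Matrix.diagonal (fun j' => A j' j') - A)) i j) / (Dm i i + A j j)

def numer {𝕜 : Type*} [Field 𝕜] (A : Matrix (Fin m) (Fin m) 𝕜) (Bm : Matrix (Fin m) (Fin n) 𝕜)
    (Cm : Matrix (Fin n) (Fin m) 𝕜) (Dm : Matrix (Fin n) (Fin n) 𝕜)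
    (Z : Matrix (Fin n) (Fin m) 𝕜) : Matrix (Fin n) (Fin m) 𝕜 :=
  Z * Bm * Z + Cm + (Matrix.diagonal (fun i' => Dm i' i') - Dm) * Z
      + Z * (Matrix.diagonal (fun j' => A j' j') - A)

lemma Fmap_apply {𝕜 : Type*} [Field 𝕜] (A : Matrix (Fin m) (Fin m) 𝕜)
    (Bm : Matrix (Fin m) (Fin n) 𝕜) (Cm : Matrix (Fin n) (Fin m) 𝕜)
    (Dm : Matrix (Fin n) (Fin n) 𝕜) (Z : Matrix (Fin n) (Fin m) 𝕜) (i : Fin n) (j : Fin m) :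
    Fmap A Bm Cm Dm Z i j = numer A Bm Cm Dm Z i j / (Dm i i + A j j) := rfl

lemma numer_apply {𝕜 : Type*} [Field 𝕜] (A : Matrix (Fin m) (Fin m) 𝕜)
    (Bm : Matrix (Fin m) (Fin n) 𝕜) (Cm : Matrix (Fin n) (Fin m) 𝕜)
    (Dm : Matrix (Fin n) (Fin n) 𝕜) (Z : Matrix (Fin n) (Fin m) 𝕜) (i : Fin n) (j : Fin m) :
    numer A Bm Cm Dm Z i j = (Z * Bm * Z) i j + Cm i j
      + (Dm i i * Z i j - (Dm * Z) i j) + (Z i j * A j j - (Z * A) i j) := by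
  simp [numer, Matrix.add_apply, Matrix.sub_apply, Matrix.sub_mul, Matrix.mul_sub,
    Matrix.diagonal_mul, Matrix.mul_diagonal]

lemma numer_sub_eq {𝕜 : Type*} [Field 𝕜] (A : Matrix (Fin m) (Fin m) 𝕜)
    (Bm : Matrix (Fin m) (Fin n) 𝕜) (Cm : Matrix (Fin n) (Fin m) 𝕜)
    (Dm : Matrix (Fin n) (Fin n) 𝕜) (Z Z' : Matrix (Fin n) (Fin m) 𝕜) :
    numer A Bm Cm Dm Z' - numer A Bm Cm Dm Z
      = (Z' - Z) * Bm * Z' + Z * Bm * (Z' - Z)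
        + (Matrix.diagonal (fun i' => Dm i' i') - Dm) * (Z' - Z)
        + (Z' - Z) * (Matrix.diagonal (fun j' => A j' j') - A) := by
  unfold numer
  simp only [Matrix.sub_mul, Matrix.mul_sub]
  abel

lemma fixed_iff {𝕜 : Type*} [Field 𝕜] (A : Matrix (Fin m) (Fin m) 𝕜)
    (Bm : Matrix (Fin m) (Fin n) 𝕜) (Cm : Matrix (Fin n) (Fin m) 𝕜)
    (Dm : Matrix (Fin n) (Fin n) 𝕜) (Z : Matrix (Fin n) (Fin m) 𝕜)
    (hpos : ∀ (i : Fin n) (j : Fin m), Dm i i + A j j ≠ 0) :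
    Fmap A Bm Cm Dm Z = Z ↔ Z * Bm * Z - Z * A - Dm * Z + Cm = 0 := by
  have hentry : ∀ (i : Fin n) (j : Fin m),
      (Z * Bm * Z - Z * A - Dm * Z + Cm) i j
        = numer A Bm Cm Dm Z i j - (Dm i i + A j j) * Z i j := by
    intro i j
    rw [numer_apply]
    simp [Matrix.sub_apply, Matrix.add_apply]
    ring
  constructor
  · intro h
    ext i j
    have h1 : Fmap A Bm Cm Dm Z i j = Z i j := by rw [h]
    rw [Fmap_apply, div_eq_iff (hpos i j)] at h1
    rw [hentry i j, Matrix.zero_apply]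
    rw [h1]; ring
  · intro h
    ext i j
    have h1 : (Z * Bm * Z - Z * A - Dm * Z + Cm) i j = 0 := by rw [h]; rfl
    rw [hentry i j] at h1
    rw [Fmap_apply, div_eq_iff (hpos i j)]
    rw [show Z i j * (Dm i i + A j j) = (Dm i i + A j j) * Z i j by ring]
    linear_combination (norm := noncomm_ring) h1 -- numer = (d+a) Z from h1
end Fmap
section Main

variable {m n : ℕ} {ω : ℝ}
variable {A : Matrix (Fin m) (Fin m) ℂ} {B : Matrix (Fin m) (Fin n) ℂ}
  {C : Matrix (Fin n) (Fin m) ℂ} {D : Matrix (Fin n) (Fin n) ℂ}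
variable {At : Matrix (Fin m) (Fin m) ℝ} {Bt : Matrix (Fin m) (Fin n) ℝ}
  {Ct : Matrix (Fin n) (Fin m) ℝ} {Dt : Matrix (Fin n) (Fin n) ℝ}
variable {Ψt : Matrix (Fin n) (Fin m) ℝ}

/-- row sum of a product -/
lemma rowsum_mul {α β γ : Type*} [Fintype β] [Fintype γ]
    (P : Matrix α β ℝ) (Q : Matrix β γ ℝ) (i : α) :
    ∑ j, (P * Q) i j = ∑ k, P i k * (∑ j, Q k j) := by
  simp only [Matrix.mul_apply]
  rw [Finset.sum_comm]
  simp [Finset.mul_sum]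

lemma D2_nonneg (hDoff : ∀ i k, i ≠ k → Dt i k ≤ 0) :
    ∀ i k, 0 ≤ (Matrix.diagonal (fun i' => Dt i' i') - Dt) i k := by
  intro i k
  by_cases h : i = k
  · subst h; simp [Matrix.diagonal_apply]
  · simp [Matrix.sub_apply, Matrix.diagonal_apply, h]
    linarith [hDoff i k h]

lemma A2_nonneg (hAoff : ∀ j k, j ≠ k → At j k ≤ 0) :
    ∀ j k, 0 ≤ (Matrix.diagonal (fun j' => At j' j') - At) j k := by
  intro j k
  by_cases h : j = k
  · subst h; simp [Matrix.diagonal_apply]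
  · simp [Matrix.sub_apply, Matrix.diagonal_apply, h]
    linarith [hAoff j k h]

lemma numerR_nonneg (hBt0 : ∀ j i, 0 ≤ Bt j i) (hCt0 : ∀ i j, 0 ≤ Ct i j)
    (hAoff : ∀ j k, j ≠ k → At j k ≤ 0) (hDoff : ∀ i k, i ≠ k → Dt i k ≤ 0)
    {Z : Matrix (Fin n) (Fin m) ℝ} (hZ0 : ∀ i j, 0 ≤ Z i j) :
    ∀ i j, 0 ≤ numer At Bt Ct Dt Z i j := by
  intro i j
  unfold numer
  simp only [Matrix.add_apply]
  have h1 : 0 ≤ (Z * Bt * Z) i j :=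
    mul_entry_nonneg (mul_entry_nonneg hZ0 hBt0) hZ0 i j
  have h2 : 0 ≤ ((Matrix.diagonal (fun i' => Dt i' i') - Dt) * Z) i j :=
    mul_entry_nonneg (D2_nonneg hDoff) hZ0 i j
  have h3 : 0 ≤ (Z * (Matrix.diagonal (fun j' => At j' j') - At)) i j :=
    mul_entry_nonneg hZ0 (A2_nonneg hAoff) i j
  have h4 := hCt0 i j
  linarith

lemma numerR_mono (hBt0 : ∀ j i, 0 ≤ Bt j i)
    (hAoff : ∀ j k, j ≠ k → At j k ≤ 0) (hDoff : ∀ i k, i ≠ k → Dt i k ≤ 0)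
    {Z Z' : Matrix (Fin n) (Fin m) ℝ} (hZ0 : ∀ i j, 0 ≤ Z i j)
    (hZZ' : ∀ i j, Z i j ≤ Z' i j) :
    ∀ i j, numer At Bt Ct Dt Z i j ≤ numer At Bt Ct Dt Z' i j := by
  intro i j
  unfold numer
  simp only [Matrix.add_apply]
  have h1 : (Z * Bt * Z) i j ≤ (Z' * Bt * Z') i j := by
    refine mul_entry_mono (mul_entry_nonneg hZ0 hBt0) ?_ hZ0 hZZ' i j
    exact fun i' j' => mul_entry_mono hZ0 hZZ' hBt0 (fun a b => le_rfl) i' j'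
  have h2 : ((Matrix.diagonal (fun i' => Dt i' i') - Dt) * Z) i j
      ≤ ((Matrix.diagonal (fun i' => Dt i' i') - Dt) * Z') i j :=
    mul_entry_mono (D2_nonneg hDoff) (fun a b => le_rfl) hZ0 hZZ' i j
  have h3 : (Z * (Matrix.diagonal (fun j' => At j' j') - At)) i j
      ≤ (Z' * (Matrix.diagonal (fun j' => At j' j') - At)) i j :=
    mul_entry_mono hZ0 hZZ' (A2_nonneg hAoff) (fun a b => le_rfl) i j
  linarith

lemma FmapR_nonneg (hBt0 : ∀ j i, 0 ≤ Bt j i) (hCt0 : ∀ i j, 0 ≤ Ct i j)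
    (hAoff : ∀ j k, j ≠ k → At j k ≤ 0) (hDoff : ∀ i k, i ≠ k → Dt i k ≤ 0)
    (hden : ∀ (i : Fin n) (j : Fin m), 0 < Dt i i + At j j)
    {Z : Matrix (Fin n) (Fin m) ℝ} (hZ0 : ∀ i j, 0 ≤ Z i j) :
    ∀ i j, 0 ≤ Fmap At Bt Ct Dt Z i j := by
  intro i j
  rw [Fmap_apply]
  exact div_nonneg (numerR_nonneg hBt0 hCt0 hAoff hDoff hZ0 i j) (hden i j).le

lemma FmapR_mono (hBt0 : ∀ j i, 0 ≤ Bt j i)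
    (hAoff : ∀ j k, j ≠ k → At j k ≤ 0) (hDoff : ∀ i k, i ≠ k → Dt i k ≤ 0)
    (hden : ∀ (i : Fin n) (j : Fin m), 0 < Dt i i + At j j)
    {Z Z' : Matrix (Fin n) (Fin m) ℝ} (hZ0 : ∀ i j, 0 ≤ Z i j)
    (hZZ' : ∀ i j, Z i j ≤ Z' i j) :
    ∀ i j, Fmap At Bt Ct Dt Z i j ≤ Fmap At Bt Ct Dt Z' i j := by
  intro i j
  rw [Fmap_apply, Fmap_apply]
  have h1 := numerR_mono (Ct := Ct) hBt0 hAoff hDoff hZ0 hZZ' i j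
  have h2 := hden i j
  gcongr

/-- the iterates -/
def iter {𝕜 : Type*} [Field 𝕜] (A : Matrix (Fin m) (Fin m) 𝕜) (Bm : Matrix (Fin m) (Fin n) 𝕜)
    (Cm : Matrix (Fin n) (Fin m) 𝕜) (Dm : Matrix (Fin n) (Fin n) 𝕜) (k : ℕ) :
    Matrix (Fin n) (Fin m) 𝕜 :=
  (Fmap A Bm Cm Dm)^[k] 0

lemma iter_zero {𝕜 : Type*} [Field 𝕜] (A : Matrix (Fin m) (Fin m) 𝕜)
    (Bm : Matrix (Fin m) (Fin n) 𝕜) (Cm : Matrix (Fin n) (Fin m) 𝕜)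
    (Dm : Matrix (Fin n) (Fin n) 𝕜) : iter A Bm Cm Dm 0 = 0 := rfl

lemma iter_succ {𝕜 : Type*} [Field 𝕜] (A : Matrix (Fin m) (Fin m) 𝕜)
    (Bm : Matrix (Fin m) (Fin n) 𝕜) (Cm : Matrix (Fin n) (Fin m) 𝕜)
    (Dm : Matrix (Fin n) (Fin n) 𝕜) (k : ℕ) :
    iter A Bm Cm Dm (k + 1) = Fmap A Bm Cm Dm (iter A Bm Cm Dm k) :=
  Function.iterate_succ_apply' _ _ _

variable (hBt0 : ∀ j i, 0 ≤ Bt j i) (hCt0 : ∀ i j, 0 ≤ Ct i j)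
  (hAoff : ∀ j k, j ≠ k → At j k ≤ 0) (hDoff : ∀ i k, i ≠ k → Dt i k ≤ 0)
  (hden : ∀ (i : Fin n) (j : Fin m), 0 < Dt i i + At j j)

include hBt0 hCt0 hAoff hDoff hden

lemma ZS_nonneg : ∀ k (i : Fin n) (j : Fin m), 0 ≤ iter At Bt Ct Dt k i j := by
  intro k
  induction k with
  | zero => intro i j; simp [iter_zero]
  | succ k ih =>
    rw [iter_succ]
    exact FmapR_nonneg hBt0 hCt0 hAoff hDoff hden ih

lemma ZS_mono : ∀ k (i : Fin n) (j : Fin m),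
    iter At Bt Ct Dt k i j ≤ iter At Bt Ct Dt (k + 1) i j := by
  intro k
  induction k with
  | zero =>
    intro i j
    rw [iter_zero, iter_succ, iter_zero]
    exact FmapR_nonneg hBt0 hCt0 hAoff hDoff hden (fun _ _ => le_rfl) i j
  | succ k ih =>
    rw [iter_succ, iter_succ]
    exact FmapR_mono hBt0 hAoff hDoff hden (ZS_nonneg hBt0 hCt0 hAoff hDoff hden k) ih

lemma ZS_le (hΨt0 : ∀ i j, 0 ≤ Ψt i j) (hfix : Fmap At Bt Ct Dt Ψt = Ψt) :
    ∀ k (i : Fin n) (j : Fin m), iter At Bt Ct Dt k i j ≤ Ψt i j := by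
  intro k
  induction k with
  | zero => intro i j; simp only [iter_zero, Matrix.zero_apply]; exact hΨt0 i j
  | succ k ih =>
    rw [iter_succ]
    intro i j
    calc Fmap At Bt Ct Dt (iter At Bt Ct Dt k) i j ≤ Fmap At Bt Ct Dt Ψt i j :=
          FmapR_mono hBt0 hAoff hDoff hden (ZS_nonneg hBt0 hCt0 hAoff hDoff hden k) ih i j
      _ = Ψt i j := by rw [hfix]

lemma ZS_rowsum (hdpos : ∀ i, 0 < Dt i i) (hapos : ∀ j, 0 < At j j)
    (hh : ∀ i, 0 < ∑ k, Dt i k - ∑ j, Ct i j)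
    (hg : ∀ j, 0 < ∑ k, At j k - ∑ i, Bt j i) :
    ∀ k (i : Fin n), ∑ j, iter At Bt Ct Dt k i j ≤ 1 := by
  intro k
  induction k with
  | zero => intro i; simp [iter_zero]
  | succ k ih =>
    intro i
    set Z := iter At Bt Ct Dt k with hZ
    have hZ0 : ∀ i j, 0 ≤ Z i j := ZS_nonneg hBt0 hCt0 hAoff hDoff hden k
    have hmono : ∀ i j, Z i j ≤ Fmap At Bt Ct Dt Z i j := by
      intro i j
      have := ZS_mono hBt0 hCt0 hAoff hDoff hden k i j
      rwa [iter_succ] at this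
    rw [iter_succ]
    set F := Fmap At Bt Ct Dt Z with hF
    have hF0 : ∀ i j, 0 ≤ F i j := FmapR_nonneg hBt0 hCt0 hAoff hDoff hden hZ0
    -- multiply each entry by the (positive) denominator
    have e1 : ∀ j, (Dt i i + At j j) * F i j = numer At Bt Ct Dt Z i j := by
      intro j
      rw [hF, Fmap_apply, mul_comm (Dt i i + At j j), div_mul_cancel₀ _ (ne_of_gt (hden i j))]
    -- numerator row sum, term by term
    have hnum : ∑ j, numer At Bt Ct Dt Z i j
        = (∑ j, (Z * Bt * Z) i j) + (∑ j, Ct i j)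
          + (∑ j, ((Matrix.diagonal (fun i' => Dt i' i') - Dt) * Z) i j)
          + (∑ j, (Z * (Matrix.diagonal (fun j' => At j' j') - At)) i j) := by
      unfold numer
      simp [Matrix.add_apply, Finset.sum_add_distrib]
    have hT1 : ∑ j, (Z * Bt * Z) i j ≤ ∑ k', Z i k' * (∑ l, Bt k' l) := by
      rw [rowsum_mul (Z * Bt) Z i]
      calc ∑ l, (Z * Bt) i l * (∑ j, Z l j) ≤ ∑ l, (Z * Bt) i l * 1 := by
            refine Finset.sum_le_sum fun l _ => ?_
            exact mul_le_mul_of_nonneg_left (ih l) (mul_entry_nonneg hZ0 hBt0 i l)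
        _ = ∑ l, (Z * Bt) i l := by simp
        _ = ∑ k', Z i k' * (∑ l, Bt k' l) := rowsum_mul Z Bt i
    have hD2sum : ∑ k', (Matrix.diagonal (fun i' => Dt i' i') - Dt) i k'
        = Dt i i - ∑ k', Dt i k' := by
      simp [Matrix.sub_apply, Matrix.diagonal_apply, Finset.sum_sub_distrib,
        Finset.sum_ite_eq]
    have hT3 : ∑ j, ((Matrix.diagonal (fun i' => Dt i' i') - Dt) * Z) i j
        ≤ Dt i i - ∑ k', Dt i k' := by
      rw [rowsum_mul]
      calc ∑ k', (Matrix.diagonal (fun i' => Dt i' i') - Dt) i k' * (∑ j, Z k' j)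
          ≤ ∑ k', (Matrix.diagonal (fun i' => Dt i' i') - Dt) i k' * 1 := by
            refine Finset.sum_le_sum fun k' _ => ?_
            exact mul_le_mul_of_nonneg_left (ih k') (D2_nonneg hDoff i k')
        _ = Dt i i - ∑ k', Dt i k' := by rw [← hD2sum]; simp
    have hA2row : ∀ k', ∑ j, (Matrix.diagonal (fun j' => At j' j') - At) k' j
        = At k' k' - ∑ j, At k' j := by
      intro k'
      simp [Matrix.sub_apply, Matrix.diagonal_apply, Finset.sum_sub_distrib,
        Finset.sum_ite_eq]
    have hT4 : ∑ j, (Z * (Matrix.diagonal (fun j' => At j' j') - At)) i j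
        = ∑ k', Z i k' * (At k' k' - ∑ j, At k' j) := by
      rw [rowsum_mul]
      exact Finset.sum_congr rfl fun k' _ => by rw [hA2row k']
    -- combine the quadratic and A2 terms
    have hcomb : (∑ k', Z i k' * (∑ l, Bt k' l)) + ∑ k', Z i k' * (At k' k' - ∑ j, At k' j)
        ≤ ∑ k', Z i k' * At k' k' := by
      rw [← Finset.sum_add_distrib]
      refine Finset.sum_le_sum fun k' _ => ?_
      have h1 := hg k'
      have h2 := hZ0 i k'
      nlinarith
    -- lower bound on the weighted row sum
    have hsplit : ∑ j, (Dt i i + At j j) * F i j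
        = Dt i i * (∑ j, F i j) + ∑ j, At j j * F i j := by
      rw [Finset.mul_sum, ← Finset.sum_add_distrib]
      exact Finset.sum_congr rfl fun j _ => by ring
    have hAtF : ∑ j, At j j * Z i j ≤ ∑ j, At j j * F i j := by
      refine Finset.sum_le_sum fun j _ => ?_
      exact mul_le_mul_of_nonneg_left (hmono i j) (hapos j).le
    have hAtZ : ∑ j, At j j * Z i j = ∑ k', Z i k' * At k' k' := by
      exact Finset.sum_congr rfl fun j _ => by ring
    -- put everything together
    have hmain : Dt i i * (∑ j, F i j) + ∑ j, At j j * F i j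
        ≤ Dt i i - (∑ k', Dt i k' - ∑ j, Ct i j) + ∑ j, At j j * F i j := by
      have hsum_eq : ∑ j, (Dt i i + At j j) * F i j = ∑ j, numer At Bt Ct Dt Z i j :=
        Finset.sum_congr rfl fun j _ => e1 j
      rw [← hsplit, hsum_eq, hnum]
      have := hAtF
      rw [hAtZ] at this
      linarith [hT1, hT3, hcomb, le_of_eq hT4]
    have hfinal : Dt i i * (∑ j, F i j) ≤ Dt i i - (∑ k', Dt i k' - ∑ j, Ct i j) := by
      linarith
    have h1 := hh i
    have h2 := hdpos i
    nlinarith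

lemma ZS_tendsto (hΨt0 : ∀ i j, 0 ≤ Ψt i j) (hfix : Fmap At Bt Ct Dt Ψt = Ψt)
    (hΨtMin : ∀ Z : Matrix (Fin n) (Fin m) ℝ, (∀ i j, 0 ≤ Z i j) →
      Z * Bt * Z - Z * At - Dt * Z + Ct = 0 → ∀ i j, Ψt i j ≤ Z i j) :
    ∀ (i : Fin n) (j : Fin m),
      Tendsto (fun k => iter At Bt Ct Dt k i j) atTop (𝓝 (Ψt i j)) := by
  have hdenne : ∀ (i : Fin n) (j : Fin m), Dt i i + At j j ≠ 0 :=
    fun i j => (hden i j).ne'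
  have hmono : ∀ (i : Fin n) (j : Fin m), Monotone (fun k => iter At Bt Ct Dt k i j) :=
    fun i j => monotone_nat_of_le_succ (fun k => ZS_mono hBt0 hCt0 hAoff hDoff hden k i j)
  have hbdd : ∀ (i : Fin n) (j : Fin m),
      BddAbove (Set.range (fun k => iter At Bt Ct Dt k i j)) := by
    intro i j
    refine ⟨Ψt i j, ?_⟩
    rintro x ⟨k, rfl⟩
    exact ZS_le hBt0 hCt0 hAoff hDoff hden hΨt0 hfix k i j
  set L : Matrix (Fin n) (Fin m) ℝ :=
    Matrix.of (fun i j => ⨆ k, iter At Bt Ct Dt k i j) with hL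
  have htend : ∀ (i : Fin n) (j : Fin m),
      Tendsto (fun k => iter At Bt Ct Dt k i j) atTop (𝓝 (L i j)) := by
    intro i j
    exact tendsto_atTop_ciSup (hmono i j) (hbdd i j)
  have hLle : ∀ i j, L i j ≤ Ψt i j := by
    intro i j
    exact ciSup_le (fun k => ZS_le hBt0 hCt0 hAoff hDoff hden hΨt0 hfix k i j)
  have hL0 : ∀ i j, 0 ≤ L i j := by
    intro i j
    have := le_ciSup (hbdd i j) 0
    simpa [iter_zero, hL] using this
  -- L is a fixed point
  have hnum_tend : ∀ (i : Fin n) (j : Fin m),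
      Tendsto (fun k => numer At Bt Ct Dt (iter At Bt Ct Dt k) i j) atTop
        (𝓝 (numer At Bt Ct Dt L i j)) := by
    intro i j
    have hcont : Continuous (fun Z : Matrix (Fin n) (Fin m) ℝ => numer At Bt Ct Dt Z i j) := by
      simp only [numer_apply, Matrix.mul_apply]
      fun_prop
    have hM : Tendsto (fun k => iter At Bt Ct Dt k) atTop (𝓝 L) := by
      apply tendsto_pi_nhds.mpr
      intro i'
      rw [tendsto_pi_nhds]
      intro j'
      exact htend i' j'
    exact (hcont.tendsto L).comp hM
  have hfixL : Fmap At Bt Ct Dt L = L := by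
    ext i j
    have h1 : Tendsto (fun k => iter At Bt Ct Dt (k + 1) i j) atTop (𝓝 (L i j)) :=
      (htend i j).comp (tendsto_add_atTop_nat 1)
    have h2 : Tendsto (fun k => iter At Bt Ct Dt (k + 1) i j) atTop
        (𝓝 (numer At Bt Ct Dt L i j / (Dt i i + At j j))) := by
      have : (fun k => iter At Bt Ct Dt (k + 1) i j)
          = fun k => numer At Bt Ct Dt (iter At Bt Ct Dt k) i j / (Dt i i + At j j) := by
        funext k
        rw [iter_succ, Fmap_apply]
      rw [this]
      exact (hnum_tend i j).div_const _
    have := tendsto_nhds_unique h1 h2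
    rw [Fmap_apply, ← this]
  -- L solves the NARE, so by minimality Ψt ≤ L
  have hLsol : L * Bt * L - L * At - Dt * L + Ct = 0 :=
    (fixed_iff At Bt Ct Dt L hdenne).mp hfixL
  have hΨl : ∀ i j, Ψt i j ≤ L i j := hΨtMin L hL0 hLsol
  have hLΨ : ∀ i j, L i j = Ψt i j := fun i j => le_antisymm (hLle i j) (hΨl i j)
  intro i j
  rw [← hLΨ i j]
  exact htend i j

lemma s_le_one (hΨt0 : ∀ i j, 0 ≤ Ψt i j) (hfix : Fmap At Bt Ct Dt Ψt = Ψt)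
    (hdpos : ∀ i, 0 < Dt i i) (hapos : ∀ j, 0 < At j j)
    (hh : ∀ i, 0 < ∑ k, Dt i k - ∑ j, Ct i j)
    (hg : ∀ j, 0 < ∑ k, At j k - ∑ i, Bt j i)
    (hΨtMin : ∀ Z : Matrix (Fin n) (Fin m) ℝ, (∀ i j, 0 ≤ Z i j) →
      Z * Bt * Z - Z * At - Dt * Z + Ct = 0 → ∀ i j, Ψt i j ≤ Z i j) :
    ∀ i, ∑ j, Ψt i j ≤ 1 := by
  intro i
  have htend : Tendsto (fun k => ∑ j, iter At Bt Ct Dt k i j) atTop (𝓝 (∑ j, Ψt i j)) := by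
    refine tendsto_finset_sum _ fun j _ => ?_
    exact ZS_tendsto hBt0 hCt0 hAoff hDoff hden hΨt0 hfix hΨtMin i j
  exact le_of_tendsto htend (Eventually.of_forall fun k =>
    ZS_rowsum hBt0 hCt0 hAoff hDoff hden hdpos hapos hh hg k i)

omit hBt0 hCt0 hAoff hDoff hden

variable (hω : ω ∈ Set.Icc (0:ℝ) 1)
  (habsB : ∀ j i, ‖B j i‖ ≤ Bt j i)
  (habsC : ∀ i j, ‖C i j‖ ≤ Ct i j)
  (habsAoff : ∀ j k, j ≠ k → ‖A j k‖ ≤ -At j k)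
  (habsDoff : ∀ i k, i ≠ k → ‖D i k‖ ≤ -Dt i k)
  (hwA : ∀ j, At j j ≤ wlin ω (A j j))
  (hwD : ∀ i, Dt i i ≤ wlin ω (D i i))

include hω hwA hwD in
lemma habsden : ∀ (i : Fin n) (j : Fin m),
    Dt i i + At j j ≤ ‖D i i + A j j‖ := by
  intro i j
  calc Dt i i + At j j ≤ wlin ω (D i i) + wlin ω (A j j) := by
        linarith [hwA j, hwD i]
    _ = wlin ω (D i i + A j j) := (wlin_add ω _ _).symm
    _ ≤ ‖D i i + A j j‖ := wlin_le_abs hω _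

include hden hω hwA hwD in
lemma hdenC : ∀ (i : Fin n) (j : Fin m), D i i + A j j ≠ 0 := by
  intro i j h
  have h1 := (hden i j).trans_le (habsden hω hwA hwD i j)
  rw [h] at h1
  simp at h1

include habsDoff in
lemma absD2 : ∀ i k, ‖(Matrix.diagonal (fun i' => D i' i') - D) i k‖
    ≤ (Matrix.diagonal (fun i' => Dt i' i') - Dt) i k := by
  intro i k
  by_cases h : i = k
  · subst h; simp [Matrix.sub_apply, Matrix.diagonal_apply]
  · simp only [Matrix.sub_apply, Matrix.diagonal_apply, if_neg h]
    simpa using habsDoff i k h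

include habsAoff in
lemma absA2 : ∀ j k, ‖(Matrix.diagonal (fun j' => A j' j') - A) j k‖
    ≤ (Matrix.diagonal (fun j' => At j' j') - At) j k := by
  intro j k
  by_cases h : j = k
  · subst h; simp [Matrix.sub_apply, Matrix.diagonal_apply]
  · simp only [Matrix.sub_apply, Matrix.diagonal_apply, if_neg h]
    simpa using habsAoff j k h

include habsB habsC habsAoff habsDoff in
lemma abs_numer {Y : Matrix (Fin n) (Fin m) ℂ} {Z : Matrix (Fin n) (Fin m) ℝ}
    (hY : ∀ i j, ‖Y i j‖ ≤ Z i j) :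
    ∀ i j, ‖numer A B C D Y i j‖ ≤ numer At Bt Ct Dt Z i j := by
  intro i j
  unfold numer
  simp only [Matrix.add_apply]
  have h1 : ‖(Y * B * Y) i j‖ ≤ (Z * Bt * Z) i j :=
    abs_mul_entry (abs_mul_entry hY habsB) hY i j
  have h2 : ‖((Matrix.diagonal (fun i' => D i' i') - D) * Y) i j‖
      ≤ ((Matrix.diagonal (fun i' => Dt i' i') - Dt) * Z) i j :=
    abs_mul_entry (absD2 habsDoff) hY i j
  have h3 : ‖(Y * (Matrix.diagonal (fun j' => A j' j') - A)) i j‖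
      ≤ (Z * (Matrix.diagonal (fun j' => At j' j') - At)) i j :=
    abs_mul_entry hY (absA2 habsAoff) i j
  calc ‖(Y * B * Y) i j + C i j + ((Matrix.diagonal (fun i' => D i' i') - D) * Y) i j
        + (Y * (Matrix.diagonal (fun j' => A j' j') - A)) i j‖
      ≤ ‖(Y * B * Y) i j‖ + ‖C i j‖
        + ‖((Matrix.diagonal (fun i' => D i' i') - D) * Y) i j‖
        + ‖(Y * (Matrix.diagonal (fun j' => A j' j') - A)) i j‖ := by
        refine (norm_add_le _ _).trans ?_
        gcongr
        refine (norm_add_le _ _).trans ?_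
        gcongr
        exact norm_add_le _ _
    _ ≤ _ := by
        have := habsC i j
        linarith [h1, h2, h3]

include hden hω hwA hwD habsB habsC habsAoff habsDoff in
lemma absFC {Y : Matrix (Fin n) (Fin m) ℂ} {Z : Matrix (Fin n) (Fin m) ℝ}
    (hY : ∀ i j, ‖Y i j‖ ≤ Z i j) :
    ∀ i j, ‖Fmap A B C D Y i j‖ ≤ Fmap At Bt Ct Dt Z i j := by
  intro i j
  rw [Fmap_apply, Fmap_apply, norm_div]
  have habs := abs_numer habsB habsC habsAoff habsDoff hY i j
  exact div_le_div₀ (le_trans (norm_nonneg _) habs) habs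
    (hden i j) (habsden hω hwA hwD i j)

include hden hω hwA hwD habsB habsAoff habsDoff in
lemma diffFC {Y Y' : Matrix (Fin n) (Fin m) ℂ} {Z Z' : Matrix (Fin n) (Fin m) ℝ}
    (hY : ∀ i j, ‖Y i j‖ ≤ Z i j)
    (hY' : ∀ i j, ‖Y' i j‖ ≤ Z' i j)
    (hd : ∀ i j, ‖Y' i j - Y i j‖ ≤ Z' i j - Z i j)
    (hZ0 : ∀ i j, 0 ≤ Z i j) :
    ∀ i j, ‖Fmap A B C D Y' i j - Fmap A B C D Y i j‖
      ≤ Fmap At Bt Ct Dt Z' i j - Fmap At Bt Ct Dt Z i j := by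
  intro i j
  rw [Fmap_apply, Fmap_apply, Fmap_apply, Fmap_apply, div_sub_div_same,
    div_sub_div_same, norm_div]
  have hnum : ‖numer A B C D Y' i j - numer A B C D Y i j‖
      ≤ numer At Bt Ct Dt Z' i j - numer At Bt Ct Dt Z i j := by
    have hc : numer A B C D Y' i j - numer A B C D Y i j
        = (numer A B C D Y' - numer A B C D Y) i j := rfl
    have hr : numer At Bt Ct Dt Z' i j - numer At Bt Ct Dt Z i j
        = (numer At Bt Ct Dt Z' - numer At Bt Ct Dt Z) i j := rfl
    rw [hc, hr, numer_sub_eq, numer_sub_eq]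
    simp only [Matrix.add_apply]
    have hdm : ∀ i j, ‖(Y' - Y) i j‖ ≤ (Z' - Z) i j := by
      intro i j
      rw [Matrix.sub_apply, Matrix.sub_apply]
      exact hd i j
    have h1 : ‖((Y' - Y) * B * Y') i j‖ ≤ ((Z' - Z) * Bt * Z') i j :=
      abs_mul_entry (abs_mul_entry hdm habsB) hY' i j
    have h2 : ‖(Y * B * (Y' - Y)) i j‖ ≤ (Z * Bt * (Z' - Z)) i j :=
      abs_mul_entry (abs_mul_entry hY habsB) hdm i j
    have h3 : ‖((Matrix.diagonal (fun i' => D i' i') - D) * (Y' - Y)) i j‖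
        ≤ ((Matrix.diagonal (fun i' => Dt i' i') - Dt) * (Z' - Z)) i j :=
      abs_mul_entry (absD2 habsDoff) hdm i j
    have h4 : ‖((Y' - Y) * (Matrix.diagonal (fun j' => A j' j') - A)) i j‖
        ≤ ((Z' - Z) * (Matrix.diagonal (fun j' => At j' j') - At)) i j :=
      abs_mul_entry hdm (absA2 habsAoff) i j
    calc ‖_‖
        ≤ ‖((Y' - Y) * B * Y') i j‖ + ‖(Y * B * (Y' - Y)) i j‖
          + ‖((Matrix.diagonal (fun i' => D i' i') - D) * (Y' - Y)) i j‖
          + ‖((Y' - Y) * (Matrix.diagonal (fun j' => A j' j') - A)) i j‖ := by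
          refine (norm_add_le _ _).trans ?_
          gcongr
          refine (norm_add_le _ _).trans ?_
          gcongr
          exact norm_add_le _ _
      _ ≤ _ := by linarith [h1, h2, h3, h4]
  exact div_le_div₀ (le_trans (norm_nonneg _) hnum) hnum
    (hden i j) (habsden hω hwA hwD i j)

include hBt0 hCt0 hAoff hDoff hden hω hwA hwD habsB habsC habsAoff habsDoff in
lemma YS_abs : ∀ k (i : Fin n) (j : Fin m),
    ‖iter A B C D k i j‖ ≤ iter At Bt Ct Dt k i j := by
  intro k
  induction k with
  | zero => intro i j; simp [iter_zero]
  | succ k ih =>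
    rw [iter_succ, iter_succ]
    exact absFC hden hω habsB habsC habsAoff habsDoff hwA hwD ih

include hBt0 hCt0 hAoff hDoff hden hω hwA hwD habsB habsC habsAoff habsDoff in
set_option maxHeartbeats 1000000 in
lemma YS_diff : ∀ k (i : Fin n) (j : Fin m),
    ‖iter A B C D (k + 1) i j - iter A B C D k i j‖
      ≤ iter At Bt Ct Dt (k + 1) i j - iter At Bt Ct Dt k i j := by
  intro k
  induction k with
  | zero =>
    intro i j
    simp only [iter_zero, Matrix.zero_apply, sub_zero]
    rw [iter_succ, iter_succ, iter_zero, iter_zero]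
    exact absFC hden hω habsB habsC habsAoff habsDoff hwA hwD (fun i j => by simp) i j
  | succ k ih =>
    have h1 := YS_abs hBt0 hCt0 hAoff hDoff hden hω habsB habsC habsAoff habsDoff hwA hwD k
    have h2 := YS_abs hBt0 hCt0 hAoff hDoff hden hω habsB habsC habsAoff habsDoff hwA hwD (k+1)
    have h0 := ZS_nonneg (At := At) (Bt := Bt) (Ct := Ct) (Dt := Dt) hBt0 hCt0 hAoff hDoff hden k
    intro i j
    have hgoal := diffFC (C := C) (Ct := Ct) (Y := iter A B C D k) (Y' := iter A B C D (k+1))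
      (Z := iter At Bt Ct Dt k) (Z' := iter At Bt Ct Dt (k+1))
      hden hω habsB habsAoff habsDoff hwA hwD h1 h2 ih h0 i j
    rw [← iter_succ A B C D k, ← iter_succ At Bt Ct Dt k] at hgoal
    rw [← iter_succ A B C D (k+1), ← iter_succ At Bt Ct Dt (k+1)] at hgoal
    exact hgoal

include hBt0 hCt0 hAoff hDoff hden hω hwA hwD habsB habsC habsAoff habsDoff in
lemma YS_diff_le : ∀ k l, k ≤ l → ∀ (i : Fin n) (j : Fin m),
    ‖iter A B C D l i j - iter A B C D k i j‖
      ≤ iter At Bt Ct Dt l i j - iter At Bt Ct Dt k i j := by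
  intro k l hkl
  induction l, hkl using Nat.le_induction with
  | base => intro i j; simp
  | succ l hkl ih =>
    intro i j
    have h1 := YS_diff hBt0 hCt0 hAoff hDoff hden hω habsB habsC habsAoff habsDoff hwA hwD l i j
    calc ‖iter A B C D (l+1) i j - iter A B C D k i j‖
        ≤ ‖iter A B C D (l+1) i j - iter A B C D l i j‖
          + ‖iter A B C D l i j - iter A B C D k i j‖ := by
          have := norm_sub_le_norm_sub_add_norm_sub (iter A B C D (l+1) i j) (iter A B C D l i j)
            (iter A B C D k i j)
          linarith
      _ ≤ _ := by linarith [ih i j]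

include hBt0 hCt0 hAoff hDoff hden hω hwA hwD habsB habsC habsAoff habsDoff in
lemma exists_unique_sol (hΨt0 : ∀ i j, 0 ≤ Ψt i j) (hfix : Fmap At Bt Ct Dt Ψt = Ψt)
    (hΨtMin : ∀ Z : Matrix (Fin n) (Fin m) ℝ, (∀ i j, 0 ≤ Z i j) →
      Z * Bt * Z - Z * At - Dt * Z + Ct = 0 → ∀ i j, Ψt i j ≤ Z i j) :
    ∃ Ψ : Matrix (Fin n) (Fin m) ℂ,
      (Ψ * B * Ψ - Ψ * A - D * Ψ + C = 0 ∧ ∀ i j, ‖Ψ i j‖ ≤ Ψt i j) ∧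
      ∀ Y : Matrix (Fin n) (Fin m) ℂ,
        (Y * B * Y - Y * A - D * Y + C = 0 ∧ ∀ i j, ‖Y i j‖ ≤ Ψt i j) → Y = Ψ := by
  have hdenCne := hdenC hden hω hwA hwD
  have hZtend := ZS_tendsto hBt0 hCt0 hAoff hDoff hden hΨt0 hfix hΨtMin
  have hZle := ZS_le hBt0 hCt0 hAoff hDoff hden hΨt0 hfix
  have hZmonoK : ∀ (i : Fin n) (j : Fin m), Monotone (fun k => iter At Bt Ct Dt k i j) :=
    fun i j => monotone_nat_of_le_succ (fun k => ZS_mono hBt0 hCt0 hAoff hDoff hden k i j)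
  have hYabs := YS_abs hBt0 hCt0 hAoff hDoff hden hω habsB habsC habsAoff habsDoff hwA hwD
  have hdiffle := YS_diff_le hBt0 hCt0 hAoff hDoff hden hω habsB habsC habsAoff habsDoff hwA hwD
  -- Cauchy
  have hcauchy : ∀ (i : Fin n) (j : Fin m), CauchySeq (fun k => iter A B C D k i j) := by
    intro i j
    apply cauchySeq_of_le_tendsto_0 (b := fun N => Ψt i j - iter At Bt Ct Dt N i j)
    · intro k l N hk hl
      have key : ∀ k l, N ≤ k → k ≤ l →
          dist (iter A B C D k i j) (iter A B C D l i j)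
            ≤ Ψt i j - iter At Bt Ct Dt N i j := by
        intro k l hNk hkl
        rw [Complex.dist_eq, norm_sub_rev]
        calc ‖iter A B C D l i j - iter A B C D k i j‖
            ≤ iter At Bt Ct Dt l i j - iter At Bt Ct Dt k i j := hdiffle k l hkl i j
          _ ≤ Ψt i j - iter At Bt Ct Dt N i j := by
              have h1 := hZle l i j
              have h2 := hZmonoK i j hNk
              linarith
      rcases le_total k l with h | h
      · exact key k l hk h
      · rw [dist_comm]; exact key l k hl h
    · have := Tendsto.sub (tendsto_const_nhds :
        Tendsto (fun _ : ℕ => Ψt i j) atTop (𝓝 (Ψt i j))) (hZtend i j)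
      simpa using this
  have hlim : ∀ (i : Fin n) (j : Fin m),
      ∃ z, Tendsto (fun k => iter A B C D k i j) atTop (𝓝 z) :=
    fun i j => cauchySeq_tendsto_of_complete (hcauchy i j)
  set Ψ : Matrix (Fin n) (Fin m) ℂ := Matrix.of (fun i j => (hlim i j).choose) with hΨdef
  have hΨtend : ∀ (i : Fin n) (j : Fin m),
      Tendsto (fun k => iter A B C D k i j) atTop (𝓝 (Ψ i j)) :=
    fun i j => (hlim i j).choose_spec
  have habsΨ : ∀ i j, ‖Ψ i j‖ ≤ Ψt i j := by
    intro i j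
    have h1 : Tendsto (fun k => ‖iter A B C D k i j‖) atTop
        (𝓝 (‖Ψ i j‖)) :=
      (continuous_norm.tendsto _).comp (hΨtend i j)
    exact le_of_tendsto h1 (Eventually.of_forall fun k => (hYabs k i j).trans (hZle k i j))
  -- fixed point
  have hfixΨ : Fmap A B C D Ψ = Ψ := by
    ext i j
    have hnum_tend : Tendsto (fun k => numer A B C D (iter A B C D k) i j) atTop
        (𝓝 (numer A B C D Ψ i j)) := by
      have hcont : Continuous (fun Z : Matrix (Fin n) (Fin m) ℂ => numer A B C D Z i j) := by
        simp only [numer_apply, Matrix.mul_apply]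
        fun_prop
      have hM : Tendsto (fun k => iter A B C D k) atTop (𝓝 Ψ) := by
        apply tendsto_pi_nhds.mpr
        intro i'
        rw [tendsto_pi_nhds]
        intro j'
        exact hΨtend i' j'
      exact (hcont.tendsto Ψ).comp hM
    have h1 : Tendsto (fun k => iter A B C D (k + 1) i j) atTop (𝓝 (Ψ i j)) :=
      (hΨtend i j).comp (tendsto_add_atTop_nat 1)
    have h2 : Tendsto (fun k => iter A B C D (k + 1) i j) atTop
        (𝓝 (numer A B C D Ψ i j / (D i i + A j j))) := by
      have he : (fun k => iter A B C D (k + 1) i j)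
          = fun k => numer A B C D (iter A B C D k) i j / (D i i + A j j) := by
        funext k
        rw [iter_succ, Fmap_apply]
      rw [he]
      exact hnum_tend.div_const _
    have := tendsto_nhds_unique h1 h2
    rw [Fmap_apply, ← this]
  have hsolΨ : Ψ * B * Ψ - Ψ * A - D * Ψ + C = 0 :=
    (fixed_iff A B C D Ψ hdenCne).mp hfixΨ
  refine ⟨Ψ, ⟨hsolΨ, habsΨ⟩, ?_⟩
  rintro Y ⟨hYsol, hYb⟩
  have hYfix : Fmap A B C D Y = Y := (fixed_iff A B C D Y hdenCne).mpr hYsol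
  have hkey : ∀ k (i : Fin n) (j : Fin m),
      ‖Y i j - iter A B C D k i j‖ ≤ Ψt i j - iter At Bt Ct Dt k i j := by
    intro k
    induction k with
    | zero => intro i j; simpa [iter_zero] using hYb i j
    | succ k ih =>
      have hgoal := diffFC (C := C) (Ct := Ct) (Y := iter A B C D k) (Y' := Y)
        (Z := iter At Bt Ct Dt k) (Z' := Ψt)
        hden hω habsB habsAoff habsDoff hwA hwD (hYabs k) hYb ih
        (ZS_nonneg hBt0 hCt0 hAoff hDoff hden k)
      rw [hYfix, hfix, ← iter_succ A B C D k, ← iter_succ At Bt Ct Dt k] at hgoal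
      exact hgoal
  ext i j
  have hb0 : Tendsto (fun k => Ψt i j - iter At Bt Ct Dt k i j) atTop (𝓝 0) := by
    have := Tendsto.sub (tendsto_const_nhds :
        Tendsto (fun _ : ℕ => Ψt i j) atTop (𝓝 (Ψt i j))) (hZtend i j)
    simpa using this
  have h1 : Tendsto (fun k => iter A B C D k i j) atTop (𝓝 (Y i j)) := by
    rw [tendsto_iff_dist_tendsto_zero]
    refine squeeze_zero (fun k => dist_nonneg) (fun k => ?_) hb0
    rw [Complex.dist_eq, norm_sub_rev]
    exact hkey k i j
  exact tendsto_nhds_unique h1 (hΨtend i j)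

omit hω habsB habsC habsAoff habsDoff hwA hwD

lemma abs_sub_le_add (x y : ℂ) : ‖x - y‖ ≤ ‖x‖ + ‖y‖ := by
  simpa [sub_eq_add_neg] using norm_add_le x (-y)

include hBt0 hCt0 hAoff hDoff hden in
lemma Mw_eq (hΨtSol : Ψt * Bt * Ψt - Ψt * At - Dt * Ψt + Ct = 0) :
    ∀ i, ∑ k, (Dt - Ψt * Bt) i k * (1 - ∑ l, Ψt k l)
      = (∑ k, Dt i k - ∑ j, Ct i j) + ∑ k, Ψt i k * ((∑ l, At k l) - ∑ i', Bt k i') := by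
  intro i
  have h0 : ∀ j, (Ψt * Bt * Ψt) i j - (Ψt * At) i j - (Dt * Ψt) i j + Ct i j = 0 := by
    intro j
    have : (Ψt * Bt * Ψt - Ψt * At - Dt * Ψt + Ct) i j = (0 : Matrix (Fin n) (Fin m) ℝ) i j := by
      rw [hΨtSol]
    simpa [Matrix.sub_apply, Matrix.add_apply] using this
  have hrow : (∑ j, (Ψt * Bt * Ψt) i j) - (∑ j, (Ψt * At) i j) - (∑ j, (Dt * Ψt) i j)
      + (∑ j, Ct i j) = 0 := by
    have := Finset.sum_congr rfl (fun j (_ : j ∈ Finset.univ) => h0 j)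
    simp only [Finset.sum_add_distrib, Finset.sum_sub_distrib, Finset.sum_const_zero] at this
    linarith [this]
  rw [rowsum_mul (Ψt * Bt) Ψt i, rowsum_mul Ψt At i, rowsum_mul Dt Ψt i] at hrow
  have hPB : ∑ k, (Ψt * Bt) i k = ∑ k, Ψt i k * (∑ i', Bt k i') := rowsum_mul Ψt Bt i
  have hexp : ∑ k, (Dt - Ψt * Bt) i k * (1 - ∑ l, Ψt k l)
      = (∑ k, Dt i k) - (∑ k, (Ψt * Bt) i k) - (∑ k, Dt i k * (∑ l, Ψt k l))
        + ∑ k, (Ψt * Bt) i k * (∑ l, Ψt k l) := by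
    rw [show ∀ (f : Fin n → ℝ), ∑ k, f k = ∑ k, f k from fun _ => rfl]
    simp only [Matrix.sub_apply]
    rw [← Finset.sum_sub_distrib, ← Finset.sum_sub_distrib, ← Finset.sum_add_distrib]
    exact Finset.sum_congr rfl fun k _ => by ring
  rw [hexp, hPB]
  have hsplit : ∑ k, Ψt i k * ((∑ l, At k l) - ∑ i', Bt k i')
      = (∑ k, Ψt i k * (∑ l, At k l)) - ∑ k, Ψt i k * (∑ i', Bt k i') := by
    rw [← Finset.sum_sub_distrib]
    exact Finset.sum_congr rfl fun k _ => by ring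
  rw [hsplit]
  linarith [hrow]

include hBt0 hCt0 hAoff hDoff hden in
lemma Mw_pos (hΨt0 : ∀ i j, 0 ≤ Ψt i j)
    (hΨtSol : Ψt * Bt * Ψt - Ψt * At - Dt * Ψt + Ct = 0)
    (hh : ∀ i, 0 < ∑ k, Dt i k - ∑ j, Ct i j)
    (hg : ∀ j, 0 < ∑ k, At j k - ∑ i, Bt j i) :
    ∀ i, 0 < ∑ k, (Dt - Ψt * Bt) i k * (1 - ∑ l, Ψt k l) := by
  intro i
  rw [Mw_eq hBt0 hCt0 hAoff hDoff hden hΨtSol i]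
  have h1 : 0 ≤ ∑ k, Ψt i k * ((∑ l, At k l) - ∑ i', Bt k i') :=
    Finset.sum_nonneg fun k _ => mul_nonneg (hΨt0 i k) (hg k).le
  linarith [hh i]

include hBt0 hCt0 hAoff hDoff hden in
lemma w_pos (hΨt0 : ∀ i j, 0 ≤ Ψt i j) (hfix : Fmap At Bt Ct Dt Ψt = Ψt)
    (hΨtSol : Ψt * Bt * Ψt - Ψt * At - Dt * Ψt + Ct = 0)
    (hdpos : ∀ i, 0 < Dt i i) (hapos : ∀ j, 0 < At j j)
    (hh : ∀ i, 0 < ∑ k, Dt i k - ∑ j, Ct i j)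
    (hg : ∀ j, 0 < ∑ k, At j k - ∑ i, Bt j i)
    (hΨtMin : ∀ Z : Matrix (Fin n) (Fin m) ℝ, (∀ i j, 0 ≤ Z i j) →
      Z * Bt * Z - Z * At - Dt * Z + Ct = 0 → ∀ i j, Ψt i j ≤ Z i j) :
    ∀ i, 0 < 1 - ∑ l, Ψt i l := by
  have hs := s_le_one hBt0 hCt0 hAoff hDoff hden hΨt0 hfix hdpos hapos hh hg hΨtMin
  have hw0 : ∀ i, 0 ≤ 1 - ∑ l, Ψt i l := fun i => by linarith [hs i]
  intro i
  rcases lt_or_eq_of_le (hw0 i) with h | h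
  · exact h
  -- if the weight vanishes, the positive combination is nonpositive: contradiction
  exfalso
  have hpos := Mw_pos hBt0 hCt0 hAoff hDoff hden hΨt0 hΨtSol hh hg i
  have hoffM : ∀ k, i ≠ k → (Dt - Ψt * Bt) i k ≤ 0 := by
    intro k hik
    rw [Matrix.sub_apply]
    have := mul_entry_nonneg hΨt0 hBt0 i k
    linarith [hDoff i k hik]
  have hsum : ∑ k, (Dt - Ψt * Bt) i k * (1 - ∑ l, Ψt k l)
      = (Dt - Ψt * Bt) i i * (1 - ∑ l, Ψt i l)
        + ∑ k ∈ Finset.univ.erase i, (Dt - Ψt * Bt) i k * (1 - ∑ l, Ψt k l) :=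
    (Finset.add_sum_erase Finset.univ _ (Finset.mem_univ i)).symm
  rw [hsum, ← h] at hpos
  simp only [mul_zero, zero_add] at hpos
  have : ∑ k ∈ Finset.univ.erase i, (Dt - Ψt * Bt) i k * (1 - ∑ l, Ψt k l) ≤ 0 := by
    refine Finset.sum_nonpos fun k hk => ?_
    have hik : i ≠ k := fun hc => (Finset.ne_of_mem_erase hk) hc.symm
    exact mul_nonpos_of_nonpos_of_nonneg (hoffM k hik) (hw0 k)
  linarith

include hBt0 hCt0 hAoff hDoff hden in
lemma M'1_pos (hΨt0 : ∀ i j, 0 ≤ Ψt i j) (hfix : Fmap At Bt Ct Dt Ψt = Ψt)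
    (hdpos : ∀ i, 0 < Dt i i) (hapos : ∀ j, 0 < At j j)
    (hh : ∀ i, 0 < ∑ k, Dt i k - ∑ j, Ct i j)
    (hg : ∀ j, 0 < ∑ k, At j k - ∑ i, Bt j i)
    (hΨtMin : ∀ Z : Matrix (Fin n) (Fin m) ℝ, (∀ i j, 0 ≤ Z i j) →
      Z * Bt * Z - Z * At - Dt * Z + Ct = 0 → ∀ i j, Ψt i j ≤ Z i j) :
    ∀ j, 0 < ∑ k, (At - Bt * Ψt) j k := by
  have hs := s_le_one hBt0 hCt0 hAoff hDoff hden hΨt0 hfix hdpos hapos hh hg hΨtMin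
  intro j
  have h1 : ∑ k, (At - Bt * Ψt) j k = (∑ k, At j k) - ∑ l, Bt j l * (∑ k, Ψt l k) := by
    simp only [Matrix.sub_apply]
    rw [Finset.sum_sub_distrib, rowsum_mul Bt Ψt j]
  rw [h1]
  have h2 : ∑ l, Bt j l * (∑ k, Ψt l k) ≤ ∑ l, Bt j l := by
    refine Finset.sum_le_sum fun l _ => ?_
    have := hs l
    have := hBt0 j l
    nlinarith
  linarith [hg j]

variable (hΨt0 : ∀ i j, 0 ≤ Ψt i j) (hfix : Fmap At Bt Ct Dt Ψt = Ψt)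
  (hΨtSol : Ψt * Bt * Ψt - Ψt * At - Dt * Ψt + Ct = 0)
  (hdpos : ∀ i, 0 < Dt i i) (hapos : ∀ j, 0 < At j j)
  (hh : ∀ i, 0 < ∑ k, Dt i k - ∑ j, Ct i j)
  (hg : ∀ j, 0 < ∑ k, At j k - ∑ i, Bt j i)
  (hΨtMin : ∀ Z : Matrix (Fin n) (Fin m) ℝ, (∀ i j, 0 ≤ Z i j) →
      Z * Bt * Z - Z * At - Dt * Z + Ct = 0 → ∀ i j, Ψt i j ≤ Z i j)

include hBt0 hCt0 hAoff hDoff hden hω habsB habsAoff hwA hΨt0 hfix hdpos hapos hh hg hΨtMin in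
lemma specA_pos {Ψc : Matrix (Fin n) (Fin m) ℂ}
    (hΨc : ∀ i j, ‖Ψc i j‖ ≤ Ψt i j) {μ : ℂ} {v : Fin m → ℂ} (hv : v ≠ 0)
    (heig : (A - B * Ψc) *ᵥ v = μ • v) : 0 < wlin ω μ := by
  refine gersh hω (A - B * Ψc) (At - Bt * Ψt) (fun _ => 1) (fun _ => one_pos)
    ?_ ?_ ?_ μ v hv heig
  · intro j
    rw [Matrix.sub_apply, Matrix.sub_apply, wlin_sub]
    have h1 := hwA j
    have h2 := wlin_le_abs hω ((B * Ψc) j j)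
    have h3 := abs_mul_entry habsB hΨc j j
    linarith
  · intro j k hjk
    rw [Matrix.sub_apply, Matrix.sub_apply]
    have h1 := abs_sub_le_add (A j k) ((B * Ψc) j k)
    have h2 := habsAoff j k hjk
    have h3 := abs_mul_entry habsB hΨc j k
    linarith
  · intro j
    simp only [mul_one]
    exact M'1_pos hBt0 hCt0 hAoff hDoff hden hΨt0 hfix hdpos hapos hh hg hΨtMin j

include hBt0 hCt0 hAoff hDoff hden hω habsB habsDoff hwD hΨt0 hfix hΨtSol hdpos hapos hh hg hΨtMin in
lemma specD_pos {Ψc : Matrix (Fin n) (Fin m) ℂ}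
    (hΨc : ∀ i j, ‖Ψc i j‖ ≤ Ψt i j) {ν : ℂ} {v : Fin n → ℂ} (hv : v ≠ 0)
    (heig : (D - Ψc * B) *ᵥ v = ν • v) : 0 < wlin ω ν := by
  refine gersh hω (D - Ψc * B) (Dt - Ψt * Bt) (fun i => 1 - ∑ l, Ψt i l)
    (w_pos hBt0 hCt0 hAoff hDoff hden hΨt0 hfix hΨtSol hdpos hapos hh hg hΨtMin)
    ?_ ?_ ?_ ν v hv heig
  · intro i
    rw [Matrix.sub_apply, Matrix.sub_apply, wlin_sub]
    have h1 := hwD i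
    have h2 := wlin_le_abs hω ((Ψc * B) i i)
    have h3 := abs_mul_entry hΨc habsB i i
    linarith
  · intro i k hik
    rw [Matrix.sub_apply, Matrix.sub_apply]
    have h1 := abs_sub_le_add (D i k) ((Ψc * B) i k)
    have h2 := habsDoff i k hik
    have h3 := abs_mul_entry hΨc habsB i k
    linarith
  · exact Mw_pos hBt0 hCt0 hAoff hDoff hden hΨt0 hΨtSol hh hg

end Main

end Stmt5

open Stmt5 in
/-- Existence, uniqueness and extremality for the dual NARE
`YBY − YA − DY + C = 0`. -/
theorem stmt5 {m n : ℕ} (ω : ℝ) (hω : ω ∈ Set.Icc (0 : ℝ) 1)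
    (A : Matrix (Fin m) (Fin m) ℂ) (B : Matrix (Fin m) (Fin n) ℂ)
    (C : Matrix (Fin n) (Fin m) ℂ) (D : Matrix (Fin n) (Fin n) ℂ)
    (At : Matrix (Fin m) (Fin m) ℝ) (Bt : Matrix (Fin m) (Fin n) ℝ)
    (Ct : Matrix (Fin n) (Fin m) ℝ) (Dt : Matrix (Fin n) (Fin n) ℝ)
    (hQ : IsNonsingMMatrix (omegaComp ω (Matrix.fromBlocks D (-C) (-B) A)))
    (hQ1 : ∀ i, 0 < ((omegaComp ω (Matrix.fromBlocks D (-C) (-B) A)) *ᵥ 1) i)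
    (hQt : IsNonsingMMatrix (Matrix.fromBlocks Dt (-Ct) (-Bt) At))
    (hQtle : ∀ i j, Matrix.fromBlocks Dt (-Ct) (-Bt) At i j ≤
      omegaComp ω (Matrix.fromBlocks D (-C) (-B) A) i j)
    (hQt1 : ∀ i, 0 < ((Matrix.fromBlocks Dt (-Ct) (-Bt) At) *ᵥ 1) i)
    (Ψt : Matrix (Fin n) (Fin m) ℝ)
    (hΨtPos : ∀ i j, 0 ≤ Ψt i j)
    (hΨtSol : Ψt * Bt * Ψt - Ψt * At - Dt * Ψt + Ct = 0)
    (hΨtMin : ∀ Z : Matrix (Fin n) (Fin m) ℝ, (∀ i j, 0 ≤ Z i j) →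
      Z * Bt * Z - Z * At - Dt * Z + Ct = 0 → ∀ i j, Ψt i j ≤ Z i j) :
    (∃! Ψ : Matrix (Fin n) (Fin m) ℂ,
      Ψ * B * Ψ - Ψ * A - D * Ψ + C = 0 ∧ ∀ i j, ‖Ψ i j‖ ≤ Ψt i j) ∧
    ∀ Ψ : Matrix (Fin n) (Fin m) ℂ,
      (Ψ * B * Ψ - Ψ * A - D * Ψ + C = 0 ∧ ∀ i j, ‖Ψ i j‖ ≤ Ψt i j) →
      IsUnit (A - B * Ψ).det ∧
      (∀ μ ∈ spectrum ℂ (A - B * Ψ), 0 < wlin ω μ) ∧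
      ∀ Y : Matrix (Fin n) (Fin m) ℂ, Y * B * Y - Y * A - D * Y + C = 0 →
        (∀ μ ∈ spectrum ℂ (A - B * Y), 0 < wlin ω μ) → Y = Ψ := by
  -- unpack the block hypotheses
  have hQoff := hQt.1
  have hBt0 : ∀ j i, 0 ≤ Bt j i := by
    intro j i
    have := hQoff (Sum.inr j) (Sum.inl i) (by simp)
    simpa [Matrix.fromBlocks_apply₂₁] using this
  have hCt0 : ∀ i j, 0 ≤ Ct i j := by
    intro i j
    have := hQoff (Sum.inl i) (Sum.inr j) (by simp)
    simpa [Matrix.fromBlocks_apply₁₂] using this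
  have hDoff : ∀ i k, i ≠ k → Dt i k ≤ 0 := by
    intro i k hik
    have := hQoff (Sum.inl i) (Sum.inl k) (fun hc => hik (Sum.inl.inj hc))
    simpa [Matrix.fromBlocks_apply₁₁] using this
  have hAoff : ∀ j k, j ≠ k → At j k ≤ 0 := by
    intro j k hjk
    have := hQoff (Sum.inr j) (Sum.inr k) (fun hc => hjk (Sum.inr.inj hc))
    simpa [Matrix.fromBlocks_apply₂₂] using this
  have hh : ∀ i, 0 < ∑ k, Dt i k - ∑ j, Ct i j := by
    intro i
    have h1 := hQt1 (Sum.inl i)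
    rw [Matrix.mulVec, dotProduct] at h1
    rw [Fintype.sum_sum_type] at h1
    simp only [Matrix.fromBlocks_apply₁₁, Matrix.fromBlocks_apply₁₂, Pi.one_apply,
      mul_one, Matrix.neg_apply] at h1
    rw [Finset.sum_neg_distrib] at h1
    linarith
  have hg : ∀ j, 0 < ∑ k, At j k - ∑ i, Bt j i := by
    intro j
    have h1 := hQt1 (Sum.inr j)
    rw [Matrix.mulVec, dotProduct] at h1
    rw [Fintype.sum_sum_type] at h1
    simp only [Matrix.fromBlocks_apply₂₁, Matrix.fromBlocks_apply₂₂, Pi.one_apply,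
      mul_one, Matrix.neg_apply] at h1
    rw [Finset.sum_neg_distrib] at h1
    linarith
  have hwD : ∀ i, Dt i i ≤ wlin ω (D i i) := by
    intro i
    have := hQtle (Sum.inl i) (Sum.inl i)
    simpa [omegaComp, Matrix.fromBlocks_apply₁₁] using this
  have hwA : ∀ j, At j j ≤ wlin ω (A j j) := by
    intro j
    have := hQtle (Sum.inr j) (Sum.inr j)
    simpa [omegaComp, Matrix.fromBlocks_apply₂₂] using this
  have habsDoff : ∀ i k, i ≠ k → ‖D i k‖ ≤ -Dt i k := by
    intro i k hik
    have := hQtle (Sum.inl i) (Sum.inl k)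
    rw [omegaComp] at this
    simp only [Matrix.of_apply, if_neg (fun hc : (Sum.inl i : Fin n ⊕ Fin m) = Sum.inl k =>
      hik (Sum.inl.inj hc)), Matrix.fromBlocks_apply₁₁] at this
    linarith
  have habsAoff : ∀ j k, j ≠ k → ‖A j k‖ ≤ -At j k := by
    intro j k hjk
    have := hQtle (Sum.inr j) (Sum.inr k)
    rw [omegaComp] at this
    simp only [Matrix.of_apply, if_neg (fun hc : (Sum.inr j : Fin n ⊕ Fin m) = Sum.inr k =>
      hjk (Sum.inr.inj hc)), Matrix.fromBlocks_apply₂₂] at this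
    linarith
  have habsC : ∀ i j, ‖C i j‖ ≤ Ct i j := by
    intro i j
    have := hQtle (Sum.inl i) (Sum.inr j)
    rw [omegaComp] at this
    simp only [Matrix.of_apply, if_neg (by simp : ¬((Sum.inl i : Fin n ⊕ Fin m) = Sum.inr j)),
      Matrix.fromBlocks_apply₁₂, Matrix.neg_apply, norm_neg] at this
    linarith
  have habsB : ∀ j i, ‖B j i‖ ≤ Bt j i := by
    intro j i
    have := hQtle (Sum.inr j) (Sum.inl i)
    rw [omegaComp] at this
    simp only [Matrix.of_apply, if_neg (by simp : ¬((Sum.inr j : Fin n ⊕ Fin m) = Sum.inl i)),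
      Matrix.fromBlocks_apply₂₁, Matrix.neg_apply, norm_neg] at this
    linarith
  have hdpos : ∀ i, 0 < Dt i i := by
    intro i
    have hsum : ∑ k, Dt i k ≤ Dt i i := by
      have he : ∑ k, Dt i k = Dt i i + ∑ k ∈ Finset.univ.erase i, Dt i k :=
        (Finset.add_sum_erase Finset.univ (fun k => Dt i k) (Finset.mem_univ i)).symm
      have h2 : ∑ k ∈ Finset.univ.erase i, Dt i k ≤ 0 :=
        Finset.sum_nonpos fun k hk => hDoff i k (fun hc => (Finset.ne_of_mem_erase hk) hc.symm)
      linarith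
    have hC : 0 ≤ ∑ j, Ct i j := Finset.sum_nonneg fun j _ => hCt0 i j
    linarith [hh i]
  have hapos : ∀ j, 0 < At j j := by
    intro j
    have hsum : ∑ k, At j k ≤ At j j := by
      have he : ∑ k, At j k = At j j + ∑ k ∈ Finset.univ.erase j, At j k :=
        (Finset.add_sum_erase Finset.univ (fun k => At j k) (Finset.mem_univ j)).symm
      have h2 : ∑ k ∈ Finset.univ.erase j, At j k ≤ 0 :=
        Finset.sum_nonpos fun k hk => hAoff j k (fun hc => (Finset.ne_of_mem_erase hk) hc.symm)
      linarith
    have hB : 0 ≤ ∑ i, Bt j i := Finset.sum_nonneg fun i _ => hBt0 j i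
    linarith [hg j]
  have hden : ∀ (i : Fin n) (j : Fin m), 0 < Dt i i + At j j :=
    fun i j => add_pos (hdpos i) (hapos j)
  have hfix : Fmap At Bt Ct Dt Ψt = Ψt :=
    (fixed_iff At Bt Ct Dt Ψt (fun i j => (hden i j).ne')).mpr hΨtSol
  obtain ⟨Ψ, hΨp, huniq⟩ := exists_unique_sol hBt0 hCt0 hAoff hDoff hden hω habsB habsC
    habsAoff habsDoff hwA hwD hΨtPos hfix hΨtMin
  constructor
  · exact ⟨Ψ, hΨp, fun y hy => huniq y hy⟩
  · rintro Ψc ⟨hcsol, hcabs⟩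
    have hdetAB : IsUnit (A - B * Ψc).det := by
      rw [isUnit_iff_ne_zero]
      intro hdet
      obtain ⟨v, hv0, hv⟩ := Matrix.exists_mulVec_eq_zero_iff.mpr hdet
      have heig : (A - B * Ψc) *ᵥ v = (0 : ℂ) • v := by rw [hv]; simp
      have := specA_pos hBt0 hCt0 hAoff hDoff hden hω habsB habsAoff hwA hΨtPos hfix
        hdpos hapos hh hg hΨtMin hcabs hv0 heig
      rw [wlin_zero] at this
      exact lt_irrefl 0 this
    have hspec : ∀ μ ∈ spectrum ℂ (A - B * Ψc), 0 < wlin ω μ := by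
      intro μ hμ
      obtain ⟨v, hv0, hv⟩ := eig_of_not_isUnit (spectrum.mem_iff.mp hμ)
      exact specA_pos hBt0 hCt0 hAoff hDoff hden hω habsB habsAoff hwA hΨtPos hfix
        hdpos hapos hh hg hΨtMin hcabs hv0 hv
    refine ⟨hdetAB, hspec, ?_⟩
    intro Y hYsol hYspec
    have halg : (Y - Ψc) * (A - B * Y) - (Ψc * B - D) * (Y - Ψc)
        = -(Y * B * Y - Y * A - D * Y + C) + (Ψc * B * Ψc - Ψc * A - D * Ψc + C) := by
      simp only [Matrix.sub_mul, Matrix.mul_sub, Matrix.mul_assoc]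
      abel
    rw [hYsol, hcsol] at halg
    simp only [neg_zero, add_zero, sub_eq_zero] at halg
    have hdisj : ∀ r ∈ (Ψc * B - D).charpoly.roots,
        IsUnit ((A - B * Y) - (algebraMap ℂ (Matrix (Fin m) (Fin m) ℂ)) r) := by
      intro r hr
      obtain ⟨u, hu0, hu⟩ := eig_of_root_charpoly hr
      have heig2 : (D - Ψc * B) *ᵥ u = (-r) • u := by
        have hne : (D - Ψc * B) = -(Ψc * B - D) := by rw [neg_sub]
        rw [hne, Matrix.neg_mulVec, hu]
        exact (neg_smul r u).symm
      have hwneg := specD_pos hBt0 hCt0 hAoff hDoff hden hω habsB habsDoff hwD hΨtPos hfix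
        hΨtSol hdpos hapos hh hg hΨtMin hcabs hu0 heig2
      rw [wlin_neg] at hwneg
      by_contra hnu
      have hmem := mem_spectrum_of_det hnu
      have := hYspec r hmem
      linarith
    have hE0 := sylvester_eq_zero (Y - Ψc) (A - B * Y) (Ψc * B - D) halg hdisj
    exact sub_eq_zero.mp hE0
end
end

section
/- Let ω ∈ [0,1], let Q = [[D, −C], [−B, A]] and Q̃ = [[D̃, −C̃], [−B̃, Ã]] be as follows: Q_ω and Q̃ are nonsingular M-matrices with Q_ω·1 > 0, Q̃·1 > 0 and Q̃ ≤ Q_ω entrywise. Define the Newton sequences Φ₀ = 0, (A − Φ_kC)Φ_{k+1} + Φ_{k+1}(D − CΦ_k) = B − Φ_kCΦ_k, and Φ̃₀ = 0, (Ã − Φ̃_kC̃)Φ̃_{k+1} + Φ̃_{k+1}(D̃ − C̃Φ̃_k) = B̃ − Φ̃_kC̃Φ̃_k. Then each Sylvester equation in both iterations is uniquely solvable (so both sequences are well defined), and |Φ_{k+1} − Φ_k| ≤ Φ̃_{k+1} − Φ̃_k entrywise for all k ≥ 0; in particular |Φ_k| ≤ Φ̃_k for all k. -/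
open Matrix Filter Kronecker

noncomputable section

set_option maxHeartbeats 1000000

namespace Stmt7Aux

section Toolbox
variable {N : Type*} [Fintype N] [DecidableEq N]

lemma mm_inv_pos (M : Matrix N N ℝ) (hoff : ∀ i j, i ≠ j → M i j ≤ 0)
    (u : N → ℝ) (hu : ∀ i, 0 < u i) (hMu : ∀ i, 0 < (M *ᵥ u) i)
    (x : N → ℝ) (hx : ∀ i, 0 ≤ (M *ᵥ x) i) : ∀ i, 0 ≤ x i := by
  by_contra h
  push_neg at h
  obtain ⟨i₀, hi₀⟩ := h
  obtain ⟨i, -, hi⟩ := Finset.exists_min_image Finset.univ (fun j => x j / u j)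
    ⟨i₀, Finset.mem_univ _⟩
  set t := x i / u i with ht_def
  have ht : t < 0 := lt_of_le_of_lt (hi i₀ (Finset.mem_univ _))
    (div_neg_of_neg_of_pos hi₀ (hu i₀))
  have hxt : ∀ j, t * u j ≤ x j := by
    intro j
    have h1 : t ≤ x j / u j := hi j (Finset.mem_univ _)
    calc t * u j ≤ (x j / u j) * u j := by
          exact mul_le_mul_of_nonneg_right h1 (hu j).le
      _ = x j := div_mul_cancel₀ _ (hu j).ne'
  have hxi : x i = t * u i := by
    rw [ht_def, div_mul_cancel₀ _ (hu i).ne']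
  have hkey : (M *ᵥ x) i ≤ t * (M *ᵥ u) i := by
    simp only [Matrix.mulVec, dotProduct]
    rw [Finset.mul_sum]
    apply Finset.sum_le_sum
    intro j _
    by_cases hj : j = i
    · subst hj
      rw [hxi]; ring_nf; exact le_refl _
    · have h1 : M i j ≤ 0 := hoff i j (Ne.symm hj)
      nlinarith [hxt j]
  have := hx i
  nlinarith [hMu i]

lemma mm_strict_pos (M : Matrix N N ℝ) (hoff : ∀ i j, i ≠ j → M i j ≤ 0)
    (x : N → ℝ) (hx0 : ∀ i, 0 ≤ x i) (hMx : ∀ i, 0 < (M *ᵥ x) i) : ∀ i, 0 < x i := by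
  intro i
  rcases (hx0 i).lt_or_eq with h | h
  · exact h
  · exfalso
    have h1 : (M *ᵥ x) i ≤ 0 := by
      simp only [Matrix.mulVec, dotProduct]
      apply Finset.sum_nonpos
      intro j _
      by_cases hj : j = i
      · subst hj; rw [← h]; simp
      · exact mul_nonpos_of_nonpos_of_nonneg (hoff i j (Ne.symm hj)) (hx0 j)
    nlinarith [hMx i]

lemma mm_diag_pos (M : Matrix N N ℝ) (hoff : ∀ i j, i ≠ j → M i j ≤ 0)
    (u : N → ℝ) (hu : ∀ i, 0 < u i) (hMu : ∀ i, 0 < (M *ᵥ u) i) : ∀ i, 0 < M i i := by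
  intro i
  by_contra h
  push_neg at h
  have h1 : (M *ᵥ u) i ≤ 0 := by
    simp only [Matrix.mulVec, dotProduct]
    apply Finset.sum_nonpos
    intro j _
    by_cases hj : j = i
    · subst hj; exact mul_nonpos_of_nonpos_of_nonneg h (hu j).le
    · exact mul_nonpos_of_nonpos_of_nonneg (hoff i j (Ne.symm hj)) (hu j).le
  nlinarith [hMu i]

lemma mm_isUnit (M : Matrix N N ℝ) (hoff : ∀ i j, i ≠ j → M i j ≤ 0)
    (u : N → ℝ) (hu : ∀ i, 0 < u i) (hMu : ∀ i, 0 < (M *ᵥ u) i) : IsUnit M.det := by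
  have hinj : Function.Injective M.mulVec := by
    intro x y hxy
    have h0 : M *ᵥ (x - y) = 0 := by rw [Matrix.mulVec_sub, hxy, sub_self]
    have h1 : ∀ i, 0 ≤ (x - y) i :=
      mm_inv_pos M hoff u hu hMu _ (fun i => by rw [h0]; exact le_refl 0)
    have h0' : M *ᵥ (y - x) = 0 := by rw [Matrix.mulVec_sub, hxy, sub_self]
    have h2 : ∀ i, 0 ≤ (y - x) i :=
      mm_inv_pos M hoff u hu hMu _ (fun i => by rw [h0']; exact le_refl 0)
    funext i
    have := h1 i; have := h2 i
    simp only [Pi.sub_apply] at *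
    linarith
  rw [isUnit_iff_ne_zero]
  intro hdet
  obtain ⟨v, hv, hv0⟩ := Matrix.exists_mulVec_eq_zero_iff.mpr hdet
  apply hv
  have : M *ᵥ v = M *ᵥ 0 := by simpa using hv0
  exact hinj this


lemma mm_col_cert (M : Matrix N N ℝ) (hoff : ∀ i j, i ≠ j → M i j ≤ 0)
    (u : N → ℝ) (hu : ∀ i, 0 < u i) (hMu : ∀ i, 0 < (M *ᵥ u) i) :
    ∃ v : N → ℝ, (∀ j, 0 < v j) ∧ (∀ j, 0 < (Mᵀ *ᵥ v) j) := by
  have hdet : IsUnit M.det := mm_isUnit M hoff u hu hMu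
  have hdetT : IsUnit Mᵀ.det := by rwa [Matrix.det_transpose]
  set v := Mᵀ⁻¹ *ᵥ 1 with hv_def
  have hMv : Mᵀ *ᵥ v = 1 := by
    rw [hv_def, Matrix.mulVec_mulVec, Matrix.mul_nonsing_inv _ hdetT, Matrix.one_mulVec]
  have hv0 : ∀ j, 0 ≤ v j := by
    intro j
    set e : N → ℝ := fun k => if k = j then 1 else 0 with he_def
    set x := M⁻¹ *ᵥ e with hx_def
    have hMx : M *ᵥ x = e := by
      rw [hx_def, Matrix.mulVec_mulVec, Matrix.mul_nonsing_inv _ hdet, Matrix.one_mulVec]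
    have hx0 : ∀ k, 0 ≤ x k := by
      apply mm_inv_pos M hoff u hu hMu
      intro k
      rw [hMx, he_def]
      by_cases h : k = j <;> simp [h]
    have hvj : v j = e ⬝ᵥ v := by
      simp [dotProduct, he_def, Finset.sum_ite_eq']
    rw [hvj, ← hMx]
    have h1 : (M *ᵥ x) ⬝ᵥ v = x ⬝ᵥ (Mᵀ *ᵥ v) := by
      rw [Matrix.mulVec_transpose, dotProduct_comm, dotProduct_mulVec,
        dotProduct_comm]
    rw [h1, hMv]
    simp only [dotProduct, Pi.one_apply, mul_one]
    exact Finset.sum_nonneg fun k _ => hx0 k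
  have hoffT : ∀ i j, i ≠ j → Mᵀ i j ≤ 0 := fun i j hij => hoff j i (Ne.symm hij)
  refine ⟨v, ?_, ?_⟩
  · exact mm_strict_pos Mᵀ hoffT v hv0 (fun j => by rw [hMv]; norm_num)
  · intro j; rw [hMv]; norm_num


end Toolbox

variable {m n : ℕ}

lemma sylv_comp_le
    (A' : Matrix (Fin m) (Fin m) ℂ) (D' : Matrix (Fin n) (Fin n) ℂ)
    (A₁ : Matrix (Fin m) (Fin m) ℝ) (D₁ : Matrix (Fin n) (Fin n) ℝ)
    (hA₁off : ∀ i j, i ≠ j → A₁ i j ≤ 0) (hD₁off : ∀ i j, i ≠ j → D₁ i j ≤ 0)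
    (u : Fin m → ℝ) (hu : ∀ i, 0 < u i) (hAu : ∀ i, 0 < (A₁ *ᵥ u) i)
    (w : Fin n → ℝ) (hw : ∀ i, 0 < w i) (hDw : ∀ i, 0 < (D₁ *ᵥ w) i)
    (hdA : ∀ i, A₁ i i ≤ (A' i i).re) (hoA : ∀ i j, i ≠ j → ‖A' i j‖ ≤ -A₁ i j)
    (hdD' : ∀ j, D₁ j j ≤ (D' j j).re) (hoD : ∀ i j, i ≠ j → ‖D' i j‖ ≤ -D₁ i j)
    (Y : Matrix (Fin m) (Fin n) ℂ) (X : Matrix (Fin m) (Fin n) ℝ)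
    (R : Matrix (Fin m) (Fin n) ℂ) (S : Matrix (Fin m) (Fin n) ℝ)
    (hY : A' * Y + Y * D' = R) (hX : A₁ * X + X * D₁ = S)
    (hRS : ∀ i j, ‖R i j‖ ≤ S i j) :
    ∀ i j, ‖Y i j‖ ≤ X i j := by
  obtain ⟨v, hv, hDv⟩ := mm_col_cert D₁ hD₁off w hw hDw
  by_contra hc
  push_neg at hc
  obtain ⟨i₀, j₀, hij₀⟩ := hc
  obtain ⟨p, -, hp⟩ := Finset.exists_max_image Finset.univ
    (fun q : Fin m × Fin n => (‖Y q.1 q.2‖ - X q.1 q.2) / (u q.1 * v q.2))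
    ⟨(i₀, j₀), Finset.mem_univ _⟩
  obtain ⟨i, j⟩ := p
  set t := (‖Y i j‖ - X i j) / (u i * v j) with ht_def
  have hWpos : ∀ (a : Fin m) (b : Fin n), 0 < u a * v b := fun a b => mul_pos (hu a) (hv b)
  have ht : 0 < t := by
    have h1 := hp (i₀, j₀) (Finset.mem_univ _)
    have h2 : 0 < (‖Y i₀ j₀‖ - X i₀ j₀) / (u i₀ * v j₀) :=
      div_pos (by linarith) (hWpos i₀ j₀)
    exact lt_of_lt_of_le h2 h1
  have hb : ∀ (a : Fin m) (b : Fin n), ‖Y a b‖ ≤ X a b + t * (u a * v b) := by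
    intro a b
    have h1 := hp (a, b) (Finset.mem_univ _)
    rw [div_le_iff₀ (hWpos a b)] at h1
    simp only at h1
    linarith [h1]
  have he : ‖Y i j‖ = X i j + t * (u i * v j) := by
    have : t * (u i * v j) = ‖Y i j‖ - X i j := by
      rw [ht_def, div_mul_cancel₀ _ (hWpos i j).ne']
    linarith
  -- entry expansions
  have hYij : (A' i i + D' j j) * Y i j =
      R i j - (∑ l ∈ Finset.univ.erase i, A' i l * Y l j)
        - (∑ l ∈ Finset.univ.erase j, Y i l * D' l j) := by
    have h1 : ∑ l, A' i l * Y l j + ∑ l, Y i l * D' l j = R i j := by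
      have := congrFun (congrFun hY i) j
      simpa [Matrix.add_apply, Matrix.mul_apply] using this
    rw [← Finset.add_sum_erase Finset.univ (fun l => A' i l * Y l j) (Finset.mem_univ i),
        ← Finset.add_sum_erase Finset.univ (fun l => Y i l * D' l j) (Finset.mem_univ j)] at h1
    ring_nf
    ring_nf at h1
    linear_combination h1
  have hXij : (A₁ i i + D₁ j j) * X i j =
      S i j - (∑ l ∈ Finset.univ.erase i, A₁ i l * X l j)
        - (∑ l ∈ Finset.univ.erase j, X i l * D₁ l j) := by
    have h1 : ∑ l, A₁ i l * X l j + ∑ l, X i l * D₁ l j = S i j := by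
      have := congrFun (congrFun hX i) j
      simpa [Matrix.add_apply, Matrix.mul_apply] using this
    rw [← Finset.add_sum_erase Finset.univ (fun l => A₁ i l * X l j) (Finset.mem_univ i),
        ← Finset.add_sum_erase Finset.univ (fun l => X i l * D₁ l j) (Finset.mem_univ j)] at h1
    linarith [h1]
  -- abbreviations
  set SA := ∑ l ∈ Finset.univ.erase i, A₁ i l * X l j with hSA
  set SD := ∑ l ∈ Finset.univ.erase j, X i l * D₁ l j with hSD
  set SAW := ∑ l ∈ Finset.univ.erase i, A₁ i l * (u l * v j) with hSAW
  set SDW := ∑ l ∈ Finset.univ.erase j, (u i * v l) * D₁ l j with hSDW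
  have hdApos : 0 < A₁ i i := mm_diag_pos A₁ hA₁off u hu hAu i
  have hdDpos : 0 < D₁ j j := mm_diag_pos D₁ hD₁off w hw hDw j
  -- positivity of the certificate matrix image, entry (i,j), split form
  have hWent : 0 < (A₁ i i + D₁ j j) * (u i * v j) + SAW + SDW := by
    have h1 : (A₁ *ᵥ u) i * v j =
        A₁ i i * (u i * v j) + SAW := by
      rw [hSAW]
      simp only [Matrix.mulVec, dotProduct]
      rw [Finset.sum_mul,
        ← Finset.add_sum_erase Finset.univ (fun l => A₁ i l * u l * v j) (Finset.mem_univ i)]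
      ring_nf
    have h2 : u i * (D₁ᵀ *ᵥ v) j = D₁ j j * (u i * v j) + SDW := by
      rw [hSDW]
      simp only [Matrix.mulVec, dotProduct, Matrix.transpose_apply]
      rw [Finset.mul_sum,
        ← Finset.add_sum_erase Finset.univ (fun l => u i * (D₁ l j * v l)) (Finset.mem_univ j)]
      ring_nf
      congr 1
      apply Finset.sum_congr rfl
      intro l _
      ring
    have h3 : 0 < (A₁ *ᵥ u) i * v j := mul_pos (hAu i) (hv j)
    have h4 : 0 < u i * (D₁ᵀ *ᵥ v) j := mul_pos (hu i) (hDv j)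
    nlinarith [h1, h2]
  -- lower bound of LHS
  have hlow : (A₁ i i + D₁ j j) * ‖Y i j‖ ≤
      ‖(A' i i + D' j j) * Y i j‖ := by
    rw [norm_mul]
    apply mul_le_mul_of_nonneg_right _ (norm_nonneg _)
    calc A₁ i i + D₁ j j ≤ (A' i i).re + (D' j j).re := add_le_add (hdA i) (hdD' j)
      _ = (A' i i + D' j j).re := (Complex.add_re _ _).symm
      _ ≤ ‖A' i i + D' j j‖ := Complex.re_le_norm _
  -- upper bound via triangle inequality
  have hSAbound : ‖∑ l ∈ Finset.univ.erase i, A' i l * Y l j‖ ≤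
      -SA - t * SAW := by
    have h1 : ‖∑ l ∈ Finset.univ.erase i, A' i l * Y l j‖ ≤
        ∑ l ∈ Finset.univ.erase i, ‖A' i l‖ * ‖Y l j‖ := by
      refine (norm_sum_le _ _).trans ?_
      apply Finset.sum_le_sum
      intro l _
      rw [norm_mul]
    refine h1.trans ?_
    have h2 : ∀ l ∈ Finset.univ.erase i,
        ‖A' i l‖ * ‖Y l j‖ ≤
          (-(A₁ i l * X l j)) + (-(A₁ i l * (u l * v j))) * t := by
      intro l hl
      have hli : l ≠ i := Finset.ne_of_mem_erase hl
      have hA : ‖A' i l‖ ≤ -A₁ i l := hoA i l (Ne.symm hli)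
      have hYb : ‖Y l j‖ ≤ X l j + t * (u l * v j) := hb l j
      have := mul_le_mul hA hYb (norm_nonneg _) (by linarith [hA, norm_nonneg (A' i l)])
      nlinarith [this]
    refine (Finset.sum_le_sum h2).trans ?_
    rw [Finset.sum_add_distrib, ← Finset.sum_mul, Finset.sum_neg_distrib, Finset.sum_neg_distrib,
      ← hSA, ← hSAW]
    linarith
  have hSDbound : ‖∑ l ∈ Finset.univ.erase j, Y i l * D' l j‖ ≤
      -SD - t * SDW := by
    have h1 : ‖∑ l ∈ Finset.univ.erase j, Y i l * D' l j‖ ≤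
        ∑ l ∈ Finset.univ.erase j, ‖Y i l‖ * ‖D' l j‖ := by
      refine (norm_sum_le _ _).trans ?_
      apply Finset.sum_le_sum
      intro l _
      rw [norm_mul]
    refine h1.trans ?_
    have h2 : ∀ l ∈ Finset.univ.erase j,
        ‖Y i l‖ * ‖D' l j‖ ≤
          (-(X i l * D₁ l j)) + (-((u i * v l) * D₁ l j)) * t := by
      intro l hl
      have hlj : l ≠ j := Finset.ne_of_mem_erase hl
      have hD : ‖D' l j‖ ≤ -D₁ l j := hoD l j hlj
      have hYb : ‖Y i l‖ ≤ X i l + t * (u i * v l) := hb i l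
      have := mul_le_mul hYb hD (norm_nonneg _) (by
        have := norm_nonneg (Y i l); linarith)
      nlinarith [this]
    refine (Finset.sum_le_sum h2).trans ?_
    rw [Finset.sum_add_distrib, ← Finset.sum_mul, Finset.sum_neg_distrib, Finset.sum_neg_distrib,
      ← hSD, ← hSDW]
    linarith
  have hup : ‖(A' i i + D' j j) * Y i j‖ ≤
      S i j + (-SA - t * SAW) + (-SD - t * SDW) := by
    rw [hYij]
    calc ‖R i j - (∑ l ∈ Finset.univ.erase i, A' i l * Y l j)
          - (∑ l ∈ Finset.univ.erase j, Y i l * D' l j)‖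
        ≤ ‖R i j‖ + ‖∑ l ∈ Finset.univ.erase i, A' i l * Y l j‖
          + ‖∑ l ∈ Finset.univ.erase j, Y i l * D' l j‖ := by
          refine (norm_sub_le _ _).trans ?_
          gcongr
          exact norm_sub_le _ _
      _ ≤ S i j + (-SA - t * SAW) + (-SD - t * SDW) :=
          add_le_add (add_le_add (hRS i j) hSAbound) hSDbound
  -- combine everything
  have hfinal : (A₁ i i + D₁ j j) * (X i j + t * (u i * v j)) ≤
      S i j + (-SA - t * SAW) + (-SD - t * SDW) := by
    rw [← he]
    exact hlow.trans hup
  nlinarith [hfinal, hXij, hWent, ht]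


lemma sylv_comp_exu
    (A' : Matrix (Fin m) (Fin m) ℂ) (D' : Matrix (Fin n) (Fin n) ℂ)
    (A₁ : Matrix (Fin m) (Fin m) ℝ) (D₁ : Matrix (Fin n) (Fin n) ℝ)
    (hA₁off : ∀ i j, i ≠ j → A₁ i j ≤ 0) (hD₁off : ∀ i j, i ≠ j → D₁ i j ≤ 0)
    (u : Fin m → ℝ) (hu : ∀ i, 0 < u i) (hAu : ∀ i, 0 < (A₁ *ᵥ u) i)
    (w : Fin n → ℝ) (hw : ∀ i, 0 < w i) (hDw : ∀ i, 0 < (D₁ *ᵥ w) i)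
    (hdA : ∀ i, A₁ i i ≤ (A' i i).re) (hoA : ∀ i j, i ≠ j → ‖A' i j‖ ≤ -A₁ i j)
    (hdD' : ∀ j, D₁ j j ≤ (D' j j).re) (hoD : ∀ i j, i ≠ j → ‖D' i j‖ ≤ -D₁ i j)
    (R : Matrix (Fin m) (Fin n) ℂ) : ∃! Y : Matrix (Fin m) (Fin n) ℂ, A' * Y + Y * D' = R := by
  have hzero : ∀ Y : Matrix (Fin m) (Fin n) ℂ, A' * Y + Y * D' = 0 → Y = 0 := by
    intro Y hY
    have h1 : ∀ i j, ‖Y i j‖ ≤ (0 : Matrix (Fin m) (Fin n) ℝ) i j := by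
      apply sylv_comp_le A' D' A₁ D₁ hA₁off hD₁off u hu hAu w hw hDw hdA hoA hdD' hoD
        Y 0 0 0 hY (by simp) (by simp)
    funext i j
    have := h1 i j
    simp only [Matrix.zero_apply] at *
    have h2 := norm_nonneg (Y i j)
    have h3 : ‖Y i j‖ = 0 := le_antisymm this h2
    exact norm_eq_zero.mp h3
  let L : Matrix (Fin m) (Fin n) ℂ →ₗ[ℂ] Matrix (Fin m) (Fin n) ℂ :=
    { toFun := fun Y => A' * Y + Y * D'
      map_add' := fun Y Z => by
        simp only [Matrix.mul_add, Matrix.add_mul]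
        abel
      map_smul' := fun c Y => by
        simp only [RingHom.id_apply, Matrix.mul_smul, Matrix.smul_mul, smul_add] }
  have hinj : Function.Injective L := by
    rw [injective_iff_map_eq_zero]
    intro Y hY
    exact hzero Y hY
  have hsurj : Function.Surjective L := (LinearMap.injective_iff_surjective).mp hinj
  obtain ⟨Y, hY⟩ := hsurj R
  refine ⟨Y, hY, ?_⟩
  intro Y' hY'
  apply hinj
  show A' * Y' + Y' * D' = L Y
  rw [hY', hY]


-- real inverse positivity via complexification
lemma sylv_real_pos
    (A₁ : Matrix (Fin m) (Fin m) ℝ) (D₁ : Matrix (Fin n) (Fin n) ℝ)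
    (hA₁off : ∀ i j, i ≠ j → A₁ i j ≤ 0) (hD₁off : ∀ i j, i ≠ j → D₁ i j ≤ 0)
    (u : Fin m → ℝ) (hu : ∀ i, 0 < u i) (hAu : ∀ i, 0 < (A₁ *ᵥ u) i)
    (w : Fin n → ℝ) (hw : ∀ i, 0 < w i) (hDw : ∀ i, 0 < (D₁ *ᵥ w) i)
    (X S : Matrix (Fin m) (Fin n) ℝ) (hX : A₁ * X + X * D₁ = S)
    (hS : ∀ i j, 0 ≤ S i j) : ∀ i j, 0 ≤ X i j := by
  have key : ∀ i j, ‖(X.map (Complex.ofRealHom)) i j‖ ≤ X i j := by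
    apply sylv_comp_le (A₁.map Complex.ofRealHom) (D₁.map Complex.ofRealHom) A₁ D₁
      hA₁off hD₁off u hu hAu w hw hDw
    · intro i; simp [Matrix.map_apply]
    · intro i j hij
      simp only [Matrix.map_apply, Complex.ofRealHom_eq_coe, Complex.norm_real, Real.norm_eq_abs]
      rw [abs_of_nonpos (hA₁off i j hij)]
    · intro j; simp [Matrix.map_apply]
    · intro i j hij
      simp only [Matrix.map_apply, Complex.ofRealHom_eq_coe, Complex.norm_real, Real.norm_eq_abs]
      rw [abs_of_nonpos (hD₁off i j hij)]
    · rw [show (A₁.map Complex.ofRealHom) * (X.map Complex.ofRealHom) +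
          (X.map Complex.ofRealHom) * (D₁.map Complex.ofRealHom) =
          (A₁ * X + X * D₁).map Complex.ofRealHom from by
        rw [Matrix.map_add _ (fun a b => map_add Complex.ofRealHom a b)]
        congr 1 <;> exact (Matrix.map_mul (f := Complex.ofRealHom)).symm, hX]
    · exact hX
    · intro i j
      simp only [Matrix.map_apply, Complex.ofRealHom_eq_coe, Complex.norm_real, Real.norm_eq_abs]
      rw [abs_of_nonneg (hS i j)]
  intro i j
  have h1 := key i j
  simp only [Matrix.map_apply, Complex.ofRealHom_eq_coe, Complex.norm_real, Real.norm_eq_abs] at h1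
  calc (0:ℝ) ≤ |X i j| := abs_nonneg _
    _ ≤ X i j := h1

lemma sylv_real_exu
    (A₁ : Matrix (Fin m) (Fin m) ℝ) (D₁ : Matrix (Fin n) (Fin n) ℝ)
    (hA₁off : ∀ i j, i ≠ j → A₁ i j ≤ 0) (hD₁off : ∀ i j, i ≠ j → D₁ i j ≤ 0)
    (u : Fin m → ℝ) (hu : ∀ i, 0 < u i) (hAu : ∀ i, 0 < (A₁ *ᵥ u) i)
    (w : Fin n → ℝ) (hw : ∀ i, 0 < w i) (hDw : ∀ i, 0 < (D₁ *ᵥ w) i)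
    (S : Matrix (Fin m) (Fin n) ℝ) : ∃! X : Matrix (Fin m) (Fin n) ℝ, A₁ * X + X * D₁ = S := by
  have hzero : ∀ X : Matrix (Fin m) (Fin n) ℝ, A₁ * X + X * D₁ = 0 → X = 0 := by
    intro X hX
    have h1 := sylv_real_pos A₁ D₁ hA₁off hD₁off u hu hAu w hw hDw X 0 hX (by simp)
    have h2 := sylv_real_pos A₁ D₁ hA₁off hD₁off u hu hAu w hw hDw (-X) 0
      (by rw [Matrix.mul_neg, Matrix.neg_mul, ← neg_add, hX, neg_zero]) (by simp)
    funext i j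
    have := h1 i j
    have h3 := h2 i j
    simp only [Matrix.neg_apply, Matrix.zero_apply] at *
    linarith
  let L : Matrix (Fin m) (Fin n) ℝ →ₗ[ℝ] Matrix (Fin m) (Fin n) ℝ :=
    { toFun := fun X => A₁ * X + X * D₁
      map_add' := fun Y Z => by
        simp only [Matrix.mul_add, Matrix.add_mul]
        abel
      map_smul' := fun c Y => by
        simp only [RingHom.id_apply, Matrix.mul_smul, Matrix.smul_mul, smul_add] }
  have hinj : Function.Injective L := by
    rw [injective_iff_map_eq_zero]
    intro Y hY
    exact hzero Y hY
  have hsurj : Function.Surjective L := (LinearMap.injective_iff_surjective).mp hinj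
  obtain ⟨X, hX⟩ := hsurj S
  refine ⟨X, hX, ?_⟩
  intro X' hX'
  apply hinj
  show A₁ * X' + X' * D₁ = L X
  rw [hX', hX]

-- entrywise product bounds
lemma abs_mul_le {a b c : ℕ} (Z : Matrix (Fin a) (Fin b) ℂ) (Cc : Matrix (Fin b) (Fin c) ℂ)
    (X : Matrix (Fin a) (Fin b) ℝ) (Ct : Matrix (Fin b) (Fin c) ℝ)
    (h1 : ∀ i j, ‖Z i j‖ ≤ X i j) (h2 : ∀ i j, ‖Cc i j‖ ≤ Ct i j) :
    ∀ i j, ‖(Z * Cc) i j‖ ≤ (X * Ct) i j := by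
  intro i j
  rw [Matrix.mul_apply, Matrix.mul_apply]
  refine (norm_sum_le _ _).trans ?_
  apply Finset.sum_le_sum
  intro l _
  rw [norm_mul]
  exact mul_le_mul (h1 i l) (h2 l j) (norm_nonneg _)
    ((norm_nonneg _).trans (h1 i l))

lemma mul_entry_nonneg {a b c : ℕ} (X : Matrix (Fin a) (Fin b) ℝ) (Y : Matrix (Fin b) (Fin c) ℝ)
    (h1 : ∀ i j, 0 ≤ X i j) (h2 : ∀ i j, 0 ≤ Y i j) : ∀ i j, 0 ≤ (X * Y) i j := by
  intro i j
  rw [Matrix.mul_apply]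
  exact Finset.sum_nonneg fun l _ => mul_nonneg (h1 i l) (h2 l j)

lemma mulVec_nonneg {a b : ℕ} (X : Matrix (Fin a) (Fin b) ℝ) (v : Fin b → ℝ)
    (h1 : ∀ i j, 0 ≤ X i j) (h2 : ∀ j, 0 ≤ v j) : ∀ i, 0 ≤ (X *ᵥ v) i := by
  intro i
  simp only [Matrix.mulVec, dotProduct]
  exact Finset.sum_nonneg fun l _ => mul_nonneg (h1 i l) (h2 l)

lemma mulVec_mono_vec {a b : ℕ} (X : Matrix (Fin a) (Fin b) ℝ) (v w : Fin b → ℝ)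
    (h1 : ∀ i j, 0 ≤ X i j) (h2 : ∀ j, v j ≤ w j) : ∀ i, (X *ᵥ v) i ≤ (X *ᵥ w) i := by
  intro i
  simp only [Matrix.mulVec, dotProduct]
  exact Finset.sum_le_sum fun l _ => mul_le_mul_of_nonneg_left (h2 l) (h1 i l)

lemma mulVec_mono_mat {a b : ℕ} (X Y : Matrix (Fin a) (Fin b) ℝ) (v : Fin b → ℝ)
    (h1 : ∀ i j, X i j ≤ Y i j) (h2 : ∀ j, 0 ≤ v j) : ∀ i, (X *ᵥ v) i ≤ (Y *ᵥ v) i := by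
  intro i
  simp only [Matrix.mulVec, dotProduct]
  exact Finset.sum_le_sum fun l _ => mul_le_mul_of_nonneg_right (h1 i l) (h2 l)


section Step
variable (At : Matrix (Fin m) (Fin m) ℝ) (Bt : Matrix (Fin m) (Fin n) ℝ)
  (Ct : Matrix (Fin n) (Fin m) ℝ) (Dt : Matrix (Fin n) (Fin n) ℝ)

-- certificates from the invariant
lemma cert_offA (hAtoff : ∀ i j, i ≠ j → At i j ≤ 0) (hCt0 : ∀ i j, 0 ≤ Ct i j)
    (X : Matrix (Fin m) (Fin n) ℝ) (hX0 : ∀ i j, 0 ≤ X i j) :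
    ∀ i j, i ≠ j → (At - X * Ct) i j ≤ 0 := by
  intro i j hij
  have h1 := mul_entry_nonneg X Ct hX0 hCt0 i j
  have h2 := hAtoff i j hij
  simp only [Matrix.sub_apply]
  linarith

lemma cert_offD (hDtoff : ∀ i j, i ≠ j → Dt i j ≤ 0) (hCt0 : ∀ i j, 0 ≤ Ct i j)
    (X : Matrix (Fin m) (Fin n) ℝ) (hX0 : ∀ i j, 0 ≤ X i j) :
    ∀ i j, i ≠ j → (Dt - Ct * X) i j ≤ 0 := by
  intro i j hij
  have h1 := mul_entry_nonneg Ct X hCt0 hX0 i j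
  have h2 := hDtoff i j hij
  simp only [Matrix.sub_apply]
  linarith

lemma cert_D1 (hCt0 : ∀ i j, 0 ≤ Ct i j) (hdc : ∀ i, (Ct *ᵥ 1) i < (Dt *ᵥ 1) i)
    (X : Matrix (Fin m) (Fin n) ℝ) (hX0 : ∀ i j, 0 ≤ X i j) (hX1 : ∀ i, (X *ᵥ 1) i < 1) :
    ∀ i, 0 < ((Dt - Ct * X) *ᵥ 1) i := by
  intro i
  have h1 : ((Dt - Ct * X) *ᵥ 1) i = (Dt *ᵥ 1) i - (Ct *ᵥ (X *ᵥ 1)) i := by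
    rw [Matrix.sub_mulVec, ← Matrix.mulVec_mulVec]
    simp [Pi.sub_apply]
  have h2 : (Ct *ᵥ (X *ᵥ 1)) i ≤ (Ct *ᵥ 1) i :=
    mulVec_mono_vec Ct _ 1 hCt0 (fun j => (hX1 j).le) i
  have h3 := hdc i
  linarith

lemma cert_A1 (hab : ∀ i, (Bt *ᵥ 1) i < (At *ᵥ 1) i)
    (hCt0 : ∀ i j, 0 ≤ Ct i j) (hdc : ∀ i, (Ct *ᵥ 1) i < (Dt *ᵥ 1) i)
    (X : Matrix (Fin m) (Fin n) ℝ) (hX0 : ∀ i j, 0 ≤ X i j)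
    (hXres : ∀ i j, 0 ≤ (Bt + X * Ct * X - At * X - X * Dt) i j) :
    ∀ i, 0 < ((At - X * Ct) *ᵥ (fun k => 1 - (X *ᵥ 1) k)) i := by
  intro i
  have huX : (fun k => 1 - (X *ᵥ 1) k) = (1 : Fin m → ℝ) - X *ᵥ 1 := by
    funext k; simp [Pi.sub_apply]
  have h1 : ((At - X * Ct) *ᵥ (fun k => 1 - (X *ᵥ 1) k)) i =
      (At *ᵥ 1) i - (At *ᵥ (X *ᵥ 1)) i - (X *ᵥ (Ct *ᵥ 1)) i + (X *ᵥ (Ct *ᵥ (X *ᵥ 1))) i := by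
    rw [huX, Matrix.sub_mulVec, Matrix.mulVec_sub, Matrix.mulVec_sub,
      ← Matrix.mulVec_mulVec (1 : Fin m → ℝ) X Ct,
      ← Matrix.mulVec_mulVec (X *ᵥ (1 : Fin n → ℝ)) X Ct]
    simp only [Pi.sub_apply] <;> ring
  have hres : 0 ≤ (Bt *ᵥ 1) i + (X *ᵥ (Ct *ᵥ (X *ᵥ 1))) i - (At *ᵥ (X *ᵥ 1)) i
      - (X *ᵥ (Dt *ᵥ 1)) i := by
    have h2 := mulVec_nonneg _ 1 hXres (fun _ => zero_le_one) i
    have h3 : ((Bt + X * Ct * X - At * X - X * Dt) *ᵥ 1) i =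
        (Bt *ᵥ 1) i + (X *ᵥ (Ct *ᵥ (X *ᵥ 1))) i - (At *ᵥ (X *ᵥ 1)) i - (X *ᵥ (Dt *ᵥ 1)) i := by
      rw [Matrix.sub_mulVec, Matrix.sub_mulVec, Matrix.add_mulVec,
        ← Matrix.mulVec_mulVec (1 : Fin n → ℝ) At X,
        ← Matrix.mulVec_mulVec (1 : Fin n → ℝ) X Dt,
        ← Matrix.mulVec_mulVec (1 : Fin n → ℝ) (X * Ct) X,
        ← Matrix.mulVec_mulVec (X *ᵥ (1 : Fin n → ℝ)) X Ct]
      simp only [Pi.sub_apply, Pi.add_apply] <;> ring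
    rw [h3] at h2
    linarith
  have hXdc : 0 ≤ (X *ᵥ (Dt *ᵥ 1)) i - (X *ᵥ (Ct *ᵥ 1)) i := by
    have h4 := mulVec_nonneg X (Dt *ᵥ 1 - Ct *ᵥ 1) hX0
      (fun j => by have := hdc j; simp only [Pi.sub_apply]; linarith) i
    rw [Matrix.mulVec_sub] at h4
    simpa using h4
  have h5 := hab i
  linarith

lemma stepR (hAtoff : ∀ i j, i ≠ j → At i j ≤ 0) (hDtoff : ∀ i j, i ≠ j → Dt i j ≤ 0)
    (hCt0 : ∀ i j, 0 ≤ Ct i j)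
    (hab : ∀ i, (Bt *ᵥ 1) i < (At *ᵥ 1) i) (hdc : ∀ i, (Ct *ᵥ 1) i < (Dt *ᵥ 1) i)
    (X : Matrix (Fin m) (Fin n) ℝ) (hX0 : ∀ i j, 0 ≤ X i j)
    (hXres : ∀ i j, 0 ≤ (Bt + X * Ct * X - At * X - X * Dt) i j)
    (hX1 : ∀ i, (X *ᵥ 1) i < 1) :
    (∃! Y : Matrix (Fin m) (Fin n) ℝ,
      (At - X * Ct) * Y + Y * (Dt - Ct * X) = Bt - X * Ct * X) ∧
    ∀ Y : Matrix (Fin m) (Fin n) ℝ,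
      (At - X * Ct) * Y + Y * (Dt - Ct * X) = Bt - X * Ct * X →
      (∀ i j, X i j ≤ Y i j) ∧ (∀ i j, 0 ≤ Y i j) ∧
      (Bt + Y * Ct * Y - At * Y - Y * Dt = (Y - X) * Ct * (Y - X)) ∧
      (∀ i j, 0 ≤ (Bt + Y * Ct * Y - At * Y - Y * Dt) i j) ∧
      (∀ i, (Y *ᵥ 1) i < 1) := by
  have hA₁off := cert_offA At Ct hAtoff hCt0 X hX0
  have hD₁off := cert_offD Ct Dt hDtoff hCt0 X hX0
  have huX : ∀ i, 0 < (fun k => 1 - (X *ᵥ 1) k) i := fun i => by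
    have := hX1 i; simp only; linarith
  have hAuX := cert_A1 At Bt Ct Dt hab hCt0 hdc X hX0 hXres
  have hD₁1 := cert_D1 Ct Dt hCt0 hdc X hX0 hX1
  have hone : ∀ i : Fin n, 0 < (1 : Fin n → ℝ) i := fun i => zero_lt_one
  constructor
  · exact sylv_real_exu (At - X * Ct) (Dt - Ct * X) hA₁off hD₁off _ huX hAuX 1 hone hD₁1 _
  intro Y hY
  -- increment is nonnegative
  have hiden : (At - X * Ct) * (Y - X) + (Y - X) * (Dt - Ct * X) =
      Bt + X * Ct * X - At * X - X * Dt := by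
    have h0 : ((At - X * Ct) * (Y - X) + (Y - X) * (Dt - Ct * X))
        - (Bt + X * Ct * X - At * X - X * Dt)
        = ((At - X * Ct) * Y + Y * (Dt - Ct * X)) - (Bt - X * Ct * X) := by
      simp only [Matrix.sub_mul, Matrix.mul_sub, Matrix.add_mul, Matrix.mul_add,
        Matrix.mul_assoc]
      abel
    rw [hY, sub_self] at h0
    exact sub_eq_zero.mp h0
  have hYX : ∀ i j, X i j ≤ Y i j := by
    intro i j
    have h1 := sylv_real_pos (At - X * Ct) (Dt - Ct * X) hA₁off hD₁off _ huX hAuX 1 hone hD₁1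
      (Y - X) _ hiden hXres i j
    simp only [Matrix.sub_apply] at h1
    linarith
  have hY0 : ∀ i j, 0 ≤ Y i j := fun i j => (hX0 i j).trans (hYX i j)
  -- residual identity
  have hresid : Bt + Y * Ct * Y - At * Y - Y * Dt = (Y - X) * Ct * (Y - X) := by
    have h0 : (Bt + Y * Ct * Y - At * Y - Y * Dt) - ((Y - X) * Ct * (Y - X))
        = (Bt - X * Ct * X) - ((At - X * Ct) * Y + Y * (Dt - Ct * X)) := by
      simp only [Matrix.sub_mul, Matrix.mul_sub, Matrix.add_mul, Matrix.mul_add,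
        Matrix.mul_assoc]
      abel
    rw [hY, sub_self] at h0
    exact sub_eq_zero.mp h0
  have hYres : ∀ i j, 0 ≤ (Bt + Y * Ct * Y - At * Y - Y * Dt) i j := by
    rw [hresid]
    have hYX' : ∀ i j, 0 ≤ (Y - X) i j := fun i j => by
      have := hYX i j; simp only [Matrix.sub_apply]; linarith
    exact mul_entry_nonneg _ _ (mul_entry_nonneg _ _ hYX' hCt0) hYX'
  -- next certificate
  have hY1 : ∀ i, (Y *ᵥ 1) i < 1 := by
    have hkey : ∀ i, 0 < ((At - X * Ct) *ᵥ (fun k => 1 - (Y *ᵥ 1) k)) i := by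
      intro i
      have heq : ((At - X * Ct) *ᵥ (fun k => 1 - (Y *ᵥ 1) k)) i =
          ((At - X * Ct) *ᵥ (fun k => (1:ℝ))) i - ((At - X * Ct) *ᵥ (Y *ᵥ 1)) i := by
        have : (fun k => 1 - (Y *ᵥ 1) k) = (fun k => (1:ℝ)) - Y *ᵥ 1 := by
          funext k; simp [Pi.sub_apply]
        rw [this, Matrix.mulVec_sub]
        rfl
      have heq2 : ((At - X * Ct) *ᵥ (Y *ᵥ 1)) i =
          (Bt *ᵥ 1) i - (X *ᵥ (Ct *ᵥ (X *ᵥ 1))) i - (Y *ᵥ ((Dt - Ct * X) *ᵥ 1)) i := by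
        have h2 := congrArg (fun M => (M *ᵥ (1 : Fin n → ℝ)) i) hY
        simp only [Matrix.add_mulVec, Matrix.sub_mulVec, Pi.add_apply, Pi.sub_apply] at h2
        rw [← Matrix.mulVec_mulVec (1 : Fin n → ℝ) (At - X * Ct) Y,
          ← Matrix.mulVec_mulVec (1 : Fin n → ℝ) Y (Dt - Ct * X),
          ← Matrix.mulVec_mulVec (1 : Fin n → ℝ) (X * Ct) X,
          ← Matrix.mulVec_mulVec (X *ᵥ (1 : Fin n → ℝ)) X Ct] at h2
        try simp only [Pi.sub_apply] at h2
        linarith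
      have heq3 : ((At - X * Ct) *ᵥ (fun k => (1:ℝ))) i = (At *ᵥ 1) i - (X *ᵥ (Ct *ᵥ 1)) i := by
        have h1 : (fun k => (1:ℝ)) = (1 : Fin m → ℝ) := rfl
        rw [h1, Matrix.sub_mulVec, ← Matrix.mulVec_mulVec (1 : Fin m → ℝ) X Ct]
        simp [Pi.sub_apply]
      -- lower bound Y *ᵥ (D₁ *ᵥ 1) ≥ X *ᵥ (D₁ *ᵥ 1)
      have hD₁10 : ∀ j, 0 ≤ ((Dt - Ct * X) *ᵥ 1) j := fun j => (hD₁1 j).le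
      have hYD : (X *ᵥ ((Dt - Ct * X) *ᵥ 1)) i ≤ (Y *ᵥ ((Dt - Ct * X) *ᵥ 1)) i :=
        mulVec_mono_mat X Y _ hYX hD₁10 i
      have hXD : (X *ᵥ ((Dt - Ct * X) *ᵥ 1)) i =
          (X *ᵥ (Dt *ᵥ 1)) i - (X *ᵥ (Ct *ᵥ (X *ᵥ 1))) i := by
        rw [Matrix.sub_mulVec, ← Matrix.mulVec_mulVec (1 : Fin n → ℝ) Ct X,
          Matrix.mulVec_sub]
        rfl
      have hXdc : 0 ≤ (X *ᵥ (Dt *ᵥ 1)) i - (X *ᵥ (Ct *ᵥ 1)) i := by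
        have h4 := mulVec_nonneg X (Dt *ᵥ 1 - Ct *ᵥ 1) hX0
          (fun j => by have := hdc j; simp only [Pi.sub_apply]; linarith) i
        rw [Matrix.mulVec_sub] at h4
        simpa using h4
      have h5 := hab i
      rw [heq, heq2, heq3]
      linarith
    have hz0 := mm_inv_pos (At - X * Ct) hA₁off _ huX hAuX _ (fun i => (hkey i).le)
    have hz1 := mm_strict_pos (At - X * Ct) hA₁off _ hz0 hkey
    intro i
    have := hz1 i
    linarith
  exact ⟨hYX, hY0, hresid, hYres, hY1⟩

end Step

section StepC
variable (τ : ℂ) (A : Matrix (Fin m) (Fin m) ℂ) (B : Matrix (Fin m) (Fin n) ℂ)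
  (C : Matrix (Fin n) (Fin m) ℂ) (D : Matrix (Fin n) (Fin n) ℂ)
  (At : Matrix (Fin m) (Fin m) ℝ) (Bt : Matrix (Fin m) (Fin n) ℝ)
  (Ct : Matrix (Fin n) (Fin m) ℝ) (Dt : Matrix (Fin n) (Fin n) ℝ)

lemma stepC (hτ0 : τ ≠ 0) (hτ1 : ‖τ‖ ≤ 1)
    (hAd : ∀ i, At i i ≤ (τ * A i i).re)
    (hAoff : ∀ i j, i ≠ j → ‖A i j‖ ≤ -At i j)
    (hDd : ∀ j, Dt j j ≤ (τ * D j j).re)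
    (hDoff : ∀ i j, i ≠ j → ‖D i j‖ ≤ -Dt i j)
    (hCb : ∀ i j, ‖C i j‖ ≤ Ct i j)
    (hAtoff : ∀ i j, i ≠ j → At i j ≤ 0) (hDtoff : ∀ i j, i ≠ j → Dt i j ≤ 0)
    (hCt0 : ∀ i j, 0 ≤ Ct i j)
    (hab : ∀ i, (Bt *ᵥ 1) i < (At *ᵥ 1) i) (hdc : ∀ i, (Ct *ᵥ 1) i < (Dt *ᵥ 1) i)
    (X : Matrix (Fin m) (Fin n) ℝ) (hX0 : ∀ i j, 0 ≤ X i j)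
    (hXres : ∀ i j, 0 ≤ (Bt + X * Ct * X - At * X - X * Dt) i j)
    (hX1 : ∀ i, (X *ᵥ 1) i < 1)
    (Z : Matrix (Fin m) (Fin n) ℂ) (hZ : ∀ i j, ‖Z i j‖ ≤ X i j)
    (hZres : ∀ i j, ‖(B + Z * C * Z - A * Z - Z * D) i j‖ ≤
      (Bt + X * Ct * X - At * X - X * Dt) i j)
    (Y : Matrix (Fin m) (Fin n) ℝ)
    (hY : (At - X * Ct) * Y + Y * (Dt - Ct * X) = Bt - X * Ct * X) :
    (∃! W : Matrix (Fin m) (Fin n) ℂ,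
      (A - Z * C) * W + W * (D - C * Z) = B - Z * C * Z) ∧
    ∀ W : Matrix (Fin m) (Fin n) ℂ,
      (A - Z * C) * W + W * (D - C * Z) = B - Z * C * Z →
      (∀ i j, ‖(W - Z) i j‖ ≤ (Y - X) i j) ∧
      (∀ i j, ‖W i j‖ ≤ Y i j) ∧
      (∀ i j, ‖(B + W * C * W - A * W - W * D) i j‖ ≤
        (Bt + Y * Ct * Y - At * Y - Y * Dt) i j) := by
  -- certificates
  have hA₁off := cert_offA At Ct hAtoff hCt0 X hX0
  have hD₁off := cert_offD Ct Dt hDtoff hCt0 X hX0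
  have huX : ∀ i, 0 < (fun k => 1 - (X *ᵥ 1) k) i := fun i => by
    have := hX1 i; simp only; linarith
  have hAuX := cert_A1 At Bt Ct Dt hab hCt0 hdc X hX0 hXres
  have hD₁1 := cert_D1 Ct Dt hCt0 hdc X hX0 hX1
  have hone : ∀ i : Fin n, 0 < (1 : Fin n → ℝ) i := fun i => zero_lt_one
  -- entrywise bounds for products with Z
  have hZC := abs_mul_le Z C X Ct hZ hCb
  have hCZ := abs_mul_le C Z Ct X hCb hZ
  -- comparison hypotheses for the scaled matrices
  have hdA2 : ∀ i, (At - X * Ct) i i ≤ ((τ • (A - Z * C)) i i).re := by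
    intro i
    have h1 : ((τ • (A - Z * C)) i i).re = (τ * A i i).re - (τ * (Z * C) i i).re := by
      simp [Matrix.smul_apply, Matrix.sub_apply, mul_sub, Complex.sub_re]
    have h2 : (τ * (Z * C) i i).re ≤ (X * Ct) i i := by
      calc (τ * (Z * C) i i).re ≤ ‖τ * (Z * C) i i‖ := Complex.re_le_norm _
        _ = ‖τ‖ * ‖(Z * C) i i‖ := norm_mul _ _
        _ ≤ 1 * (X * Ct) i i := by
            apply mul_le_mul hτ1 (hZC i i) (norm_nonneg _) zero_le_one
        _ = (X * Ct) i i := one_mul _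
    have h3 := hAd i
    simp only [Matrix.sub_apply]
    linarith
  have hoA2 : ∀ i j, i ≠ j → ‖(τ • (A - Z * C)) i j‖ ≤ -(At - X * Ct) i j := by
    intro i j hij
    have h1 : ‖(τ • (A - Z * C)) i j‖ =
        ‖τ‖ * ‖A i j - (Z * C) i j‖ := by
      simp [Matrix.smul_apply, Matrix.sub_apply, norm_mul]
    have h2 : ‖A i j - (Z * C) i j‖ ≤ -At i j + (X * Ct) i j := by
      refine (norm_sub_le _ _).trans ?_
      exact add_le_add (hAoff i j hij) (hZC i j)
    have h4 : 0 ≤ ‖A i j - (Z * C) i j‖ := norm_nonneg _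
    have h5 : ‖τ‖ * ‖A i j - (Z * C) i j‖ ≤
        1 * (-At i j + (X * Ct) i j) :=
      mul_le_mul hτ1 h2 h4 zero_le_one
    simp only [Matrix.sub_apply]
    rw [h1]
    linarith
  have hdD2 : ∀ j, (Dt - Ct * X) j j ≤ ((τ • (D - C * Z)) j j).re := by
    intro j
    have h1 : ((τ • (D - C * Z)) j j).re = (τ * D j j).re - (τ * (C * Z) j j).re := by
      simp [Matrix.smul_apply, Matrix.sub_apply, mul_sub, Complex.sub_re]
    have h2 : (τ * (C * Z) j j).re ≤ (Ct * X) j j := by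
      calc (τ * (C * Z) j j).re ≤ ‖τ * (C * Z) j j‖ := Complex.re_le_norm _
        _ = ‖τ‖ * ‖(C * Z) j j‖ := norm_mul _ _
        _ ≤ 1 * (Ct * X) j j := by
            apply mul_le_mul hτ1 (hCZ j j) (norm_nonneg _) zero_le_one
        _ = (Ct * X) j j := one_mul _
    have h3 := hDd j
    simp only [Matrix.sub_apply]
    linarith
  have hoD2 : ∀ i j, i ≠ j → ‖(τ • (D - C * Z)) i j‖ ≤ -(Dt - Ct * X) i j := by
    intro i j hij
    have h1 : ‖(τ • (D - C * Z)) i j‖ =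
        ‖τ‖ * ‖D i j - (C * Z) i j‖ := by
      simp [Matrix.smul_apply, Matrix.sub_apply, norm_mul]
    have h2 : ‖D i j - (C * Z) i j‖ ≤ -Dt i j + (Ct * X) i j := by
      refine (norm_sub_le _ _).trans ?_
      exact add_le_add (hDoff i j hij) (hCZ i j)
    have h5 : ‖τ‖ * ‖D i j - (C * Z) i j‖ ≤
        1 * (-Dt i j + (Ct * X) i j) :=
      mul_le_mul hτ1 h2 (norm_nonneg _) zero_le_one
    simp only [Matrix.sub_apply]
    rw [h1]
    linarith
  -- equivalence of scaled and unscaled equations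
  have hequiv : ∀ (W R' : Matrix (Fin m) (Fin n) ℂ),
      ((τ • (A - Z * C)) * W + W * (τ • (D - C * Z)) = τ • R') ↔
      ((A - Z * C) * W + W * (D - C * Z) = R') := by
    intro W R'
    rw [Matrix.smul_mul, Matrix.mul_smul, ← smul_add]
    constructor
    · intro h
      exact smul_right_injective _ hτ0 h
    · intro h
      rw [h]
  constructor
  · obtain ⟨W, hW, hWu⟩ := sylv_comp_exu (τ • (A - Z * C)) (τ • (D - C * Z))
      (At - X * Ct) (Dt - Ct * X) hA₁off hD₁off _ huX hAuX 1 hone hD₁1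
      hdA2 hoA2 hdD2 hoD2 (τ • (B - Z * C * Z))
    exact ⟨W, (hequiv W _).mp hW, fun W' h' => hWu W' ((hequiv W' _).mpr h')⟩
  intro W hW
  -- increment equations
  have hincr : (A - Z * C) * (W - Z) + (W - Z) * (D - C * Z) =
      B + Z * C * Z - A * Z - Z * D := by
    have h0 : ((A - Z * C) * (W - Z) + (W - Z) * (D - C * Z))
        - (B + Z * C * Z - A * Z - Z * D)
        = ((A - Z * C) * W + W * (D - C * Z)) - (B - Z * C * Z) := by
      simp only [Matrix.sub_mul, Matrix.mul_sub, Matrix.add_mul, Matrix.mul_add,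
        Matrix.mul_assoc]
      abel
    rw [hW, sub_self] at h0
    exact sub_eq_zero.mp h0
  have hrincr : (At - X * Ct) * (Y - X) + (Y - X) * (Dt - Ct * X) =
      Bt + X * Ct * X - At * X - X * Dt := by
    have h0 : ((At - X * Ct) * (Y - X) + (Y - X) * (Dt - Ct * X))
        - (Bt + X * Ct * X - At * X - X * Dt)
        = ((At - X * Ct) * Y + Y * (Dt - Ct * X)) - (Bt - X * Ct * X) := by
      simp only [Matrix.sub_mul, Matrix.mul_sub, Matrix.add_mul, Matrix.mul_add,
        Matrix.mul_assoc]
      abel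
    rw [hY, sub_self] at h0
    exact sub_eq_zero.mp h0
  have hdiff : ∀ i j, ‖(W - Z) i j‖ ≤ (Y - X) i j := by
    apply sylv_comp_le (τ • (A - Z * C)) (τ • (D - C * Z)) (At - X * Ct) (Dt - Ct * X)
      hA₁off hD₁off _ huX hAuX 1 hone hD₁1 hdA2 hoA2 hdD2 hoD2
      (W - Z) (Y - X) (τ • (B + Z * C * Z - A * Z - Z * D))
      (Bt + X * Ct * X - At * X - X * Dt)
      ((hequiv (W - Z) _).mpr hincr) hrincr
    intro i j
    have h1 : ‖(τ • (B + Z * C * Z - A * Z - Z * D)) i j‖ =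
        ‖τ‖ * ‖(B + Z * C * Z - A * Z - Z * D) i j‖ := by
      simp [Matrix.smul_apply, norm_mul]
    rw [h1]
    calc ‖τ‖ * ‖(B + Z * C * Z - A * Z - Z * D) i j‖
        ≤ 1 * (Bt + X * Ct * X - At * X - X * Dt) i j :=
          mul_le_mul hτ1 (hZres i j) (norm_nonneg _) zero_le_one
      _ = _ := one_mul _
  have habsW : ∀ i j, ‖W i j‖ ≤ Y i j := by
    intro i j
    have h1 : W i j = Z i j + (W - Z) i j := by simp [Matrix.sub_apply]
    rw [h1]
    calc ‖Z i j + (W - Z) i j‖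
        ≤ ‖Z i j‖ + ‖(W - Z) i j‖ := norm_add_le _ _
      _ ≤ X i j + (Y - X) i j := add_le_add (hZ i j) (hdiff i j)
      _ = Y i j := by simp [Matrix.sub_apply]
  have hresW : ∀ i j, ‖(B + W * C * W - A * W - W * D) i j‖ ≤
      (Bt + Y * Ct * Y - At * Y - Y * Dt) i j := by
    have hresid : B + W * C * W - A * W - W * D = (W - Z) * C * (W - Z) := by
      have h0 : (B + W * C * W - A * W - W * D) - ((W - Z) * C * (W - Z))
          = (B - Z * C * Z) - ((A - Z * C) * W + W * (D - C * Z)) := by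
        simp only [Matrix.sub_mul, Matrix.mul_sub, Matrix.add_mul, Matrix.mul_add,
          Matrix.mul_assoc]
        abel
      rw [hW, sub_self] at h0
      exact sub_eq_zero.mp h0
    have hrresid : Bt + Y * Ct * Y - At * Y - Y * Dt = (Y - X) * Ct * (Y - X) := by
      have h0 : (Bt + Y * Ct * Y - At * Y - Y * Dt) - ((Y - X) * Ct * (Y - X))
          = (Bt - X * Ct * X) - ((At - X * Ct) * Y + Y * (Dt - Ct * X)) := by
        simp only [Matrix.sub_mul, Matrix.mul_sub, Matrix.add_mul, Matrix.mul_add,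
          Matrix.mul_assoc]
        abel
      rw [hY, sub_self] at h0
      exact sub_eq_zero.mp h0
    rw [hresid, hrresid]
    exact abs_mul_le _ _ _ _ (abs_mul_le _ _ _ _ hdiff hCb) hdiff
  exact ⟨hdiff, habsW, hresW⟩

end StepC

noncomputable def iter {α : Type*} (P : α → Prop) (R : α → α → Prop) (a0 : α) (h0 : P a0)
    (hstep : ∀ a, P a → ∃ b, R a b ∧ P b) : ℕ → {a : α // P a} :=
  fun k => Nat.rec (⟨a0, h0⟩ : {a : α // P a})
    (fun _ ih => ⟨Classical.choose (hstep ih.1 ih.2),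
      (Classical.choose_spec (hstep ih.1 ih.2)).2⟩) k

lemma iter_zero {α : Type*} (P : α → Prop) (R : α → α → Prop) (a0 : α) (h0 : P a0)
    (hstep : ∀ a, P a → ∃ b, R a b ∧ P b) : (iter P R a0 h0 hstep 0).1 = a0 := rfl

lemma iter_succ {α : Type*} (P : α → Prop) (R : α → α → Prop) (a0 : α) (h0 : P a0)
    (hstep : ∀ a, P a → ∃ b, R a b ∧ P b) (k : ℕ) :
    R (iter P R a0 h0 hstep k).1 (iter P R a0 h0 hstep (k + 1)).1 :=
  (Classical.choose_spec (hstep (iter P R a0 h0 hstep k).1 (iter P R a0 h0 hstep k).2)).1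

/-- invariant for the pair iteration -/
def Inv (A : Matrix (Fin m) (Fin m) ℂ) (B : Matrix (Fin m) (Fin n) ℂ)
    (C : Matrix (Fin n) (Fin m) ℂ) (D : Matrix (Fin n) (Fin n) ℂ)
    (At : Matrix (Fin m) (Fin m) ℝ) (Bt : Matrix (Fin m) (Fin n) ℝ)
    (Ct : Matrix (Fin n) (Fin m) ℝ) (Dt : Matrix (Fin n) (Fin n) ℝ)
    (p : Matrix (Fin m) (Fin n) ℂ × Matrix (Fin m) (Fin n) ℝ) : Prop :=
  (∀ i j, 0 ≤ p.2 i j) ∧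
  (∀ i j, 0 ≤ (Bt + p.2 * Ct * p.2 - At * p.2 - p.2 * Dt) i j) ∧
  (∀ i, (p.2 *ᵥ 1) i < 1) ∧
  (∀ i j, ‖p.1 i j‖ ≤ p.2 i j) ∧
  (∀ i j, ‖(B + p.1 * C * p.1 - A * p.1 - p.1 * D) i j‖ ≤
    (Bt + p.2 * Ct * p.2 - At * p.2 - p.2 * Dt) i j)

section Master
variable (τ : ℂ) (A : Matrix (Fin m) (Fin m) ℂ) (B : Matrix (Fin m) (Fin n) ℂ)
  (C : Matrix (Fin n) (Fin m) ℂ) (D : Matrix (Fin n) (Fin n) ℂ)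
  (At : Matrix (Fin m) (Fin m) ℝ) (Bt : Matrix (Fin m) (Fin n) ℝ)
  (Ct : Matrix (Fin n) (Fin m) ℝ) (Dt : Matrix (Fin n) (Fin n) ℝ)

lemma master (hτ0 : τ ≠ 0) (hτ1 : ‖τ‖ ≤ 1)
    (hAd : ∀ i, At i i ≤ (τ * A i i).re)
    (hAoff : ∀ i j, i ≠ j → ‖A i j‖ ≤ -At i j)
    (hDd : ∀ j, Dt j j ≤ (τ * D j j).re)
    (hDoff : ∀ i j, i ≠ j → ‖D i j‖ ≤ -Dt i j)
    (hCb : ∀ i j, ‖C i j‖ ≤ Ct i j)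
    (hBb : ∀ i j, ‖B i j‖ ≤ Bt i j)
    (hAtoff : ∀ i j, i ≠ j → At i j ≤ 0) (hDtoff : ∀ i j, i ≠ j → Dt i j ≤ 0)
    (hCt0 : ∀ i j, 0 ≤ Ct i j)
    (hab : ∀ i, (Bt *ᵥ 1) i < (At *ᵥ 1) i) (hdc : ∀ i, (Ct *ᵥ 1) i < (Dt *ᵥ 1) i) :
    ∃ (Zs : ℕ → Matrix (Fin m) (Fin n) ℂ) (Xs : ℕ → Matrix (Fin m) (Fin n) ℝ),
      Zs 0 = 0 ∧ Xs 0 = 0 ∧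
      (∀ k, (A - Zs k * C) * Zs (k + 1) + Zs (k + 1) * (D - C * Zs k) =
        B - Zs k * C * Zs k) ∧
      (∀ k, (At - Xs k * Ct) * Xs (k + 1) + Xs (k + 1) * (Dt - Ct * Xs k) =
        Bt - Xs k * Ct * Xs k) ∧
      (∀ k, Inv A B C D At Bt Ct Dt (Zs k, Xs k)) ∧
      (∀ k i j, ‖(Zs (k + 1) - Zs k) i j‖ ≤ (Xs (k + 1) - Xs k) i j) := by
  set P := Inv A B C D At Bt Ct Dt with hP
  set R : (Matrix (Fin m) (Fin n) ℂ × Matrix (Fin m) (Fin n) ℝ) →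
      (Matrix (Fin m) (Fin n) ℂ × Matrix (Fin m) (Fin n) ℝ) → Prop := fun p q =>
    ((A - p.1 * C) * q.1 + q.1 * (D - C * p.1) = B - p.1 * C * p.1) ∧
    ((At - p.2 * Ct) * q.2 + q.2 * (Dt - Ct * p.2) = Bt - p.2 * Ct * p.2) ∧
    (∀ i j, ‖(q.1 - p.1) i j‖ ≤ (q.2 - p.2) i j) with hR
  have h0 : P (0, 0) := by
    refine ⟨fun i j => le_refl 0, ?_, ?_, ?_, ?_⟩
    · intro i j
      simp only [Matrix.mul_zero, Matrix.zero_mul, sub_zero, add_zero]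
      exact (norm_nonneg _).trans (hBb i j)
    · intro i
      simp [Matrix.zero_mulVec]
    · intro i j
      simp
    · intro i j
      simp only [Matrix.mul_zero, Matrix.zero_mul, sub_zero, add_zero]
      exact hBb i j
  have hstep : ∀ p, P p → ∃ q, R p q ∧ P q := by
    intro p hp
    obtain ⟨h1, h2, h3, h4, h5⟩ := hp
    obtain ⟨hexu_r, hall_r⟩ := stepR At Bt Ct Dt hAtoff hDtoff hCt0 hab hdc p.2 h1 h2 h3
    obtain ⟨Y, hYeq, -⟩ := hexu_r
    obtain ⟨hexu_c, hall_c⟩ := stepC τ A B C D At Bt Ct Dt hτ0 hτ1 hAd hAoff hDd hDoff hCb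
      hAtoff hDtoff hCt0 hab hdc p.2 h1 h2 h3 p.1 h4 h5 Y hYeq
    obtain ⟨W, hWeq, -⟩ := hexu_c
    obtain ⟨hXY, hY0, -, hYres, hY1⟩ := hall_r Y hYeq
    obtain ⟨hdiff, habsW, hresW⟩ := hall_c W hWeq
    exact ⟨(W, Y), ⟨hWeq, hYeq, hdiff⟩, hY0, hYres, hY1, habsW, hresW⟩
  refine ⟨fun k => (iter P R (0, 0) h0 hstep k).1.1,
    fun k => (iter P R (0, 0) h0 hstep k).1.2, ?_, ?_, ?_, ?_, ?_, ?_⟩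
  · exact congrArg Prod.fst (iter_zero P R (0, 0) h0 hstep)
  · exact congrArg Prod.snd (iter_zero P R (0, 0) h0 hstep)
  · exact fun k => (iter_succ P R (0, 0) h0 hstep k).1
  · exact fun k => (iter_succ P R (0, 0) h0 hstep k).2.1
  · exact fun k => (iter P R (0, 0) h0 hstep k).2
  · exact fun k => (iter_succ P R (0, 0) h0 hstep k).2.2

end Master

end Stmt7Aux

/-- The Newton iterations for the complex NARE and the dominating real M-matrix
NARE are well defined (each Sylvester equation is uniquely solvable, and the sequences exist
uniquely), and the increments of the complex iteration are entrywise dominated by those of the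
real iteration. -/
theorem stmt7 {m n : ℕ} (ω : ℝ) (hω : ω ∈ Set.Icc (0 : ℝ) 1)
    (A : Matrix (Fin m) (Fin m) ℂ) (B : Matrix (Fin m) (Fin n) ℂ)
    (C : Matrix (Fin n) (Fin m) ℂ) (D : Matrix (Fin n) (Fin n) ℂ)
    (At : Matrix (Fin m) (Fin m) ℝ) (Bt : Matrix (Fin m) (Fin n) ℝ)
    (Ct : Matrix (Fin n) (Fin m) ℝ) (Dt : Matrix (Fin n) (Fin n) ℝ)
    (hQ : IsNonsingMMatrix (omegaComp ω (Matrix.fromBlocks D (-C) (-B) A)))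
    (hQ1 : ∀ i, 0 < ((omegaComp ω (Matrix.fromBlocks D (-C) (-B) A)) *ᵥ 1) i)
    (hQt : IsNonsingMMatrix (Matrix.fromBlocks Dt (-Ct) (-Bt) At))
    (hQtle : ∀ i j, Matrix.fromBlocks Dt (-Ct) (-Bt) At i j ≤
      omegaComp ω (Matrix.fromBlocks D (-C) (-B) A) i j)
    (hQt1 : ∀ i, 0 < ((Matrix.fromBlocks Dt (-Ct) (-Bt) At) *ᵥ 1) i) :
    (∃! Φs : ℕ → Matrix (Fin m) (Fin n) ℂ, Φs 0 = 0 ∧ ∀ k,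
      (A - Φs k * C) * Φs (k + 1) + Φs (k + 1) * (D - C * Φs k) = B - Φs k * C * Φs k) ∧
    (∃! Φts : ℕ → Matrix (Fin m) (Fin n) ℝ, Φts 0 = 0 ∧ ∀ k,
      (At - Φts k * Ct) * Φts (k + 1) + Φts (k + 1) * (Dt - Ct * Φts k) =
        Bt - Φts k * Ct * Φts k) ∧
    ∀ (Φs : ℕ → Matrix (Fin m) (Fin n) ℂ) (Φts : ℕ → Matrix (Fin m) (Fin n) ℝ),
      (Φs 0 = 0 ∧ ∀ k, (A - Φs k * C) * Φs (k + 1) + Φs (k + 1) * (D - C * Φs k) =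
        B - Φs k * C * Φs k) →
      (Φts 0 = 0 ∧ ∀ k, (At - Φts k * Ct) * Φts (k + 1) + Φts (k + 1) * (Dt - Ct * Φts k) =
        Bt - Φts k * Ct * Φts k) →
      (∀ k, ∃! X : Matrix (Fin m) (Fin n) ℂ,
        (A - Φs k * C) * X + X * (D - C * Φs k) = B - Φs k * C * Φs k) ∧
      (∀ k, ∃! X : Matrix (Fin m) (Fin n) ℝ,
        (At - Φts k * Ct) * X + X * (Dt - Ct * Φts k) = Bt - Φts k * Ct * Φts k) ∧
      (∀ k i j, ‖(Φs (k + 1) - Φs k) i j‖ ≤ (Φts (k + 1) - Φts k) i j) ∧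
      (∀ k i j, ‖Φs k i j‖ ≤ Φts k i j) := by
  obtain ⟨hω0, hω1⟩ := hω
  -- extraction of blockwise hypotheses
  have hAd0 : ∀ i, At i i ≤ wlin ω (A i i) := by
    intro i
    have := hQtle (Sum.inr i) (Sum.inr i)
    simpa [omegaComp, Matrix.fromBlocks] using this
  have hAoff : ∀ i j, i ≠ j → ‖A i j‖ ≤ -At i j := by
    intro i j hij
    have := hQtle (Sum.inr i) (Sum.inr j)
    simp only [omegaComp, Matrix.fromBlocks, Matrix.of_apply, Matrix.fromBlocks_apply₂₂,
      Sum.inr.injEq] at this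
    rw [if_neg hij] at this
    simp [Matrix.fromBlocks] at this
    linarith
  have hDd0 : ∀ i, Dt i i ≤ wlin ω (D i i) := by
    intro i
    have := hQtle (Sum.inl i) (Sum.inl i)
    simpa [omegaComp, Matrix.fromBlocks] using this
  have hDoff : ∀ i j, i ≠ j → ‖D i j‖ ≤ -Dt i j := by
    intro i j hij
    have := hQtle (Sum.inl i) (Sum.inl j)
    simp only [omegaComp, Matrix.fromBlocks, Matrix.of_apply, Sum.inl.injEq] at this
    rw [if_neg hij] at this
    simp [Matrix.fromBlocks] at this
    linarith
  have hCb : ∀ i j, ‖C i j‖ ≤ Ct i j := by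
    intro i j
    have := hQtle (Sum.inl i) (Sum.inr j)
    simp [omegaComp, Matrix.fromBlocks] at this
    linarith
  have hBb : ∀ i j, ‖B i j‖ ≤ Bt i j := by
    intro i j
    have := hQtle (Sum.inr i) (Sum.inl j)
    simp [omegaComp, Matrix.fromBlocks] at this
    linarith
  have hAtoff : ∀ i j, i ≠ j → At i j ≤ 0 := by
    intro i j hij
    have := hQt.1 (Sum.inr i) (Sum.inr j) (by simp [hij])
    simpa [Matrix.fromBlocks] using this
  have hDtoff : ∀ i j, i ≠ j → Dt i j ≤ 0 := by
    intro i j hij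
    have := hQt.1 (Sum.inl i) (Sum.inl j) (by simp [hij])
    simpa [Matrix.fromBlocks] using this
  have hCt0 : ∀ i j, 0 ≤ Ct i j := by
    intro i j
    have := hQt.1 (Sum.inl i) (Sum.inr j) (by simp)
    simp [Matrix.fromBlocks] at this
    linarith
  have hone : (1 : Fin n ⊕ Fin m → ℝ) = Sum.elim (1 : Fin n → ℝ) (1 : Fin m → ℝ) := by
    funext x; cases x <;> rfl
  have hab : ∀ i, (Bt *ᵥ 1) i < (At *ᵥ 1) i := by
    intro i
    have := hQt1 (Sum.inr i)
    rw [hone, Matrix.fromBlocks_mulVec] at this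
    simp only [Sum.elim_inr, Pi.add_apply, Matrix.neg_mulVec, Pi.neg_apply,
      Sum.elim_comp_inl, Sum.elim_comp_inr] at this
    linarith
  have hdc : ∀ i, (Ct *ᵥ 1) i < (Dt *ᵥ 1) i := by
    intro i
    have := hQt1 (Sum.inl i)
    rw [hone, Matrix.fromBlocks_mulVec] at this
    simp only [Sum.elim_inl, Pi.add_apply, Matrix.neg_mulVec, Pi.neg_apply,
      Sum.elim_comp_inl, Sum.elim_comp_inr] at this
    linarith
  -- the scalar τ
  set τ : ℂ := ⟨ω, ω - 1⟩ with hτ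
  have hτ0 : τ ≠ 0 := by
    intro h
    rw [Complex.ext_iff] at h
    simp [hτ] at h
    obtain ⟨ha, hb⟩ := h
    rw [ha] at hb
    norm_num at hb
  have hτ1 : ‖τ‖ ≤ 1 := by
    rw [Complex.norm_def]
    have h2 : Complex.normSq τ = ω * ω + (ω - 1) * (ω - 1) := by
      simp [hτ, Complex.normSq_mk]
    rw [h2]
    have h3 : Real.sqrt (ω * ω + (ω - 1) * (ω - 1)) ≤ Real.sqrt 1 :=
      Real.sqrt_le_sqrt (by nlinarith)
    simpa using h3
  have hwl : ∀ z : ℂ, (τ * z).re = wlin ω z := by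
    intro z
    simp [hτ, Complex.mul_re, wlin]
    ring
  have hAd : ∀ i, At i i ≤ (τ * A i i).re := fun i => (hAd0 i).trans_eq (hwl _).symm
  have hDd : ∀ j, Dt j j ≤ (τ * D j j).re := fun j => (hDd0 j).trans_eq (hwl _).symm
  -- canonical sequences
  obtain ⟨Zs, Xs, hZ0, hX0, hrecC, hrecR, hinv, hincr⟩ :=
    Stmt7Aux.master τ A B C D At Bt Ct Dt hτ0 hτ1 hAd hAoff hDd hDoff hCb hBb
      hAtoff hDtoff hCt0 hab hdc
  -- per-step unique solvability at the canonical iterates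
  have hexuC : ∀ k, ∃! W : Matrix (Fin m) (Fin n) ℂ,
      (A - Zs k * C) * W + W * (D - C * Zs k) = B - Zs k * C * Zs k := by
    intro k
    obtain ⟨h1, h2, h3, h4, h5⟩ := hinv k
    exact (Stmt7Aux.stepC τ A B C D At Bt Ct Dt hτ0 hτ1 hAd hAoff hDd hDoff hCb
      hAtoff hDtoff hCt0 hab hdc (Xs k) h1 h2 h3 (Zs k) h4 h5 (Xs (k + 1)) (hrecR k)).1
  have hexuR : ∀ k, ∃! Y : Matrix (Fin m) (Fin n) ℝ,
      (At - Xs k * Ct) * Y + Y * (Dt - Ct * Xs k) = Bt - Xs k * Ct * Xs k := by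
    intro k
    obtain ⟨h1, h2, h3, h4, h5⟩ := hinv k
    exact (Stmt7Aux.stepR At Bt Ct Dt hAtoff hDtoff hCt0 hab hdc (Xs k) h1 h2 h3).1
  refine ⟨?_, ?_, ?_⟩
  · refine ⟨Zs, ⟨hZ0, hrecC⟩, ?_⟩
    intro Ψ hΨ
    obtain ⟨hΨ0, hΨrec⟩ := hΨ
    funext k
    induction k with
    | zero => rw [hΨ0, hZ0]
    | succ k ih =>
      have h := hΨrec k
      rw [ih] at h
      exact (hexuC k).unique h (hrecC k)
  · refine ⟨Xs, ⟨hX0, hrecR⟩, ?_⟩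
    intro Ψ hΨ
    obtain ⟨hΨ0, hΨrec⟩ := hΨ
    funext k
    induction k with
    | zero => rw [hΨ0, hX0]
    | succ k ih =>
      have h := hΨrec k
      rw [ih] at h
      exact (hexuR k).unique h (hrecR k)
  · intro Φs Φts hp hq
    obtain ⟨hp0, hprec⟩ := hp
    obtain ⟨hq0, hqrec⟩ := hq
    have hagree : ∀ k, Φs k = Zs k ∧ Φts k = Xs k := by
      intro k
      induction k with
      | zero => exact ⟨hp0.trans hZ0.symm, hq0.trans hX0.symm⟩
      | succ k ih =>
        obtain ⟨e1, e2⟩ := ih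
        constructor
        · have h := hprec k
          rw [e1] at h
          exact (hexuC k).unique h (hrecC k)
        · have h := hqrec k
          rw [e2] at h
          exact (hexuR k).unique h (hrecR k)
    refine ⟨?_, ?_, ?_, ?_⟩
    · intro k
      rw [(hagree k).1]
      exact hexuC k
    · intro k
      rw [(hagree k).2]
      exact hexuR k
    · intro k i j
      rw [(hagree k).1, (hagree (k + 1)).1, (hagree k).2, (hagree (k + 1)).2]
      exact hincr k i j
    · intro k i j
      rw [(hagree k).1, (hagree k).2]
      exact (hinv k).2.2.2.1 i j
end
end
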